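/- arXiv:1701.05508 — 3 statements merged into one kernel-verified Lean document; each statement's English description precedes it below -/
import Mathlib

section
/- Let (K,v) be a valued field of rank 1 (archimedean value group) and (K(x)|K,v) an immediate transcendental extension. Then the polynomial ring K[x] is dense in the henselization K(x)^h with respect to the valuation topology. -/
/-- A subfield of a valued field is henselian if its valuation ring is a henselian
local ring. -/
def Subfield.IsHenselian {Ω Γ : Type*} [Field Ω] [LinearOrderedCommGroupWithZero Γ]
    (w : Valuation Ω Γ) (K : Subfield Ω) : Prop :=
  HenselianLocalRing (w.comap K.subtype).valuationSubring

/-- The henselization of a subfield K of an algebraically closed valued field (Ω,w). -/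
noncomputable def henselization {Ω Γ : Type*} [Field Ω] [LinearOrderedCommGroupWithZero Γ]
    (w : Valuation Ω Γ) (K : Subfield Ω) : Subfield Ω :=
  sInf {L : Subfield Ω | K ≤ L ∧ Subfield.IsHenselian w L}

/-- The extension K ≤ L is immediate: value group and residue field do not grow. -/
def IsImmediateExt {Ω Γ : Type*} [Field Ω] [LinearOrderedCommGroupWithZero Γ]
    (w : Valuation Ω Γ) (K L : Subfield Ω) : Prop :=
  (∀ x ∈ L, x ≠ 0 → ∃ y ∈ K, w y = w x) ∧
  (∀ x ∈ L, w x = 1 → ∃ y ∈ K, w (x - y) < 1)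

/-- x is transcendental over the subfield M. -/
def TransOver {Ω : Type*} [Field Ω] (M : Subfield Ω) (x : Ω) : Prop :=
  ∀ f : Polynomial Ω, (∀ i, f.coeff i ∈ M) → Polynomial.eval x f = 0 → f = 0

namespace Stmt17
open Polynomial Finset


variable {Ω Γ : Type*} [Field Ω] [LinearOrderedCommGroupWithZero Γ]

/-- integral over the subfield M, phrased without algebra instances -/
def IntOver (M : Subfield Ω) (a : Ω) : Prop :=
  ∃ p : Polynomial Ω, p.Monic ∧ (∀ i, p.coeff i ∈ M) ∧ Polynomial.eval a p = 0

theorem range_subtype (M : Subfield Ω) : Set.range (⇑M.subtype) = (M : Set Ω) :=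
  Set.ext fun y => ⟨fun ⟨m, hm⟩ => hm ▸ m.2, fun hy => ⟨⟨y, hy⟩, rfl⟩⟩

theorem intOver_iff (M : Subfield Ω) (a : Ω) :
    IntOver M a ↔ @IsIntegral M Ω _ _ M.subtype.toAlgebra a := by
  letI : Algebra M Ω := M.subtype.toAlgebra
  constructor
  · rintro ⟨p, hm, hc, he⟩
    have hl : p ∈ Polynomial.lifts M.subtype := by
      rw [Polynomial.lifts_iff_coeff_lifts]
      intro n; rw [range_subtype]; exact hc n
    obtain ⟨q, hq, _, hqm⟩ := Polynomial.lifts_and_degree_eq_and_monic hl hm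
    refine ⟨q, hqm, ?_⟩
    have : eval₂ (algebraMap M Ω) a q = eval a (q.map M.subtype) := (eval_map _ _).symm
    rw [this, hq, he]
  · rintro ⟨q, hqm, hq⟩
    refine ⟨q.map M.subtype, hqm.map _, fun i => ?_, ?_⟩
    · rw [coeff_map]; exact (q.coeff i).2
    · rw [eval_map]; exact hq

theorem IntOver.of_mem {M : Subfield Ω} {a : Ω} (ha : a ∈ M) : IntOver M a := by
  refine ⟨X - C a, monic_X_sub_C a, fun i => ?_, by simp⟩
  match i with
  | 0 => simp [coeff_X, ha, M.neg_mem ha]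
  | 1 => simp [coeff_X, M.one_mem]
  | (n+2) => simp [coeff_X, M.zero_mem]

theorem IntOver.add {M : Subfield Ω} {a b : Ω} (ha : IntOver M a) (hb : IntOver M b) :
    IntOver M (a + b) := by
  letI : Algebra M Ω := M.subtype.toAlgebra
  rw [intOver_iff] at *
  exact ha.add hb

theorem IntOver.mul {M : Subfield Ω} {a b : Ω} (ha : IntOver M a) (hb : IntOver M b) :
    IntOver M (a * b) := by
  letI : Algebra M Ω := M.subtype.toAlgebra
  rw [intOver_iff] at *
  exact ha.mul hb

theorem IntOver.neg {M : Subfield Ω} {a : Ω} (ha : IntOver M a) : IntOver M (-a) := by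
  letI : Algebra M Ω := M.subtype.toAlgebra
  rw [intOver_iff] at *
  exact ha.neg

theorem IntOver.inv {M : Subfield Ω} {a : Ω} (ha : IntOver M a) : IntOver M a⁻¹ := by
  letI : Algebra M Ω := M.subtype.toAlgebra
  rw [intOver_iff] at *
  exact ha.inv

theorem IntOver.trans {M D : Subfield Ω} (hMD : M ≤ D) (hD : ∀ d ∈ D, IntOver M d)
    {p : Polynomial Ω} (hm : p.Monic) (hc : ∀ i, p.coeff i ∈ D) {r : Ω}
    (hr : p.eval r = 0) : IntOver M r := by
  letI aM : Algebra M Ω := M.subtype.toAlgebra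
  letI aD : Algebra D Ω := D.subtype.toAlgebra
  letI aMD : Algebra M D := (Subfield.inclusion hMD).toAlgebra
  haveI hST : IsScalarTower M D Ω := IsScalarTower.of_algebraMap_eq (fun m => rfl)
  haveI : Algebra.IsIntegral M D := by
    constructor
    intro d
    have h1 : IsIntegral M (d : Ω) := (intOver_iff M (d : Ω)).mp (hD d d.2)
    have hinj : Function.Injective (@IsScalarTower.toAlgHom M D Ω _ _ _ aMD aD aM hST) := Subtype.val_injective
    exact (isIntegral_algHom_iff (@IsScalarTower.toAlgHom M D Ω _ _ _ aMD aD aM hST) hinj).mp h1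
  have hrD : IsIntegral D r := (intOver_iff D r).mp ⟨p, hm, hc, hr⟩
  exact (intOver_iff M r).mpr (@isIntegral_trans M D Ω _ _ _ aD aM aMD hST _ r hrD)



variable {Ω Γ : Type*} [Field Ω] [LinearOrderedCommGroupWithZero Γ]
variable (w : Valuation Ω Γ)

theorem val_natCast_le_one : ∀ n : ℕ, w (n : Ω) ≤ 1
  | 0 => by simp
  | (n+1) => by
      push_cast
      exact le_trans (w.map_add _ _) (max_le (val_natCast_le_one n) (by simp))

theorem eval_mem_subfield {M : Subfield Ω} {p : Polynomial Ω} (hc : ∀ i, p.coeff i ∈ M)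
    {t : Ω} (ht : t ∈ M) : p.eval t ∈ M := by
  rw [Polynomial.eval_eq_sum_range]
  exact Subfield.sum_mem _ fun i _ => M.mul_mem (hc i) (M.pow_mem ht i)

theorem val_eval_le_one {p : Polynomial Ω} (hc : ∀ i, w (p.coeff i) ≤ 1)
    {t : Ω} (ht : w t ≤ 1) : w (p.eval t) ≤ 1 := by
  rw [Polynomial.eval_eq_sum_range]
  refine w.map_sum_le fun i _ => ?_
  rw [w.map_mul, w.map_pow]
  exact mul_le_one' (hc i) (pow_le_one' ht i)

theorem exists_ge_of_sum_eq_zero {ι : Type*} [DecidableEq ι] {s : Finset ι} {t : ι → Ω} {j : ι}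
    (hsum : ∑ i ∈ s, t i = 0) (hj : j ∈ s) (hne : w (t j) ≠ 0) :
    ∃ i ∈ s, i ≠ j ∧ w (t j) ≤ w (t i) := by
  by_contra hcon
  push_neg at hcon
  have hlt : ∀ i ∈ s.erase j, w (t i) < w (t j) := fun i hi =>
    hcon i (Finset.mem_of_mem_erase hi) (Finset.ne_of_mem_erase hi)
  have h1 : ∑ i ∈ s.erase j, t i = - t j := by
    have h := Finset.add_sum_erase s t hj
    rw [hsum] at h
    linear_combination h
  have h2 : w (∑ i ∈ s.erase j, t i) < w (t j) := Valuation.map_sum_lt _ hne hlt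
  rw [h1, w.map_neg] at h2
  exact lt_irrefl _ h2



variable {Ω Γ : Type*} [Field Ω] [LinearOrderedCommGroupWithZero Γ]
variable (w : Valuation Ω Γ) {K M : Subfield Ω}



-- auxiliary: from equal max values at two indices, extract a power equation
theorem aux_pow_eq (himm1 : ∀ e ∈ M, e ≠ 0 → ∃ y ∈ K, w y = w e)
    {a ci cj : Ω} (hci : ci ∈ M) (hcj : cj ∈ M) (hcj0 : cj ≠ 0)
    {i j : ℕ} (hij : i < j) (ha : w a ≠ 0)
    (heq : w ci * w a ^ i = w cj * w a ^ j) :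
    ∃ y ∈ K, y ≠ 0 ∧ ∃ m : ℕ, 1 ≤ m ∧ w a ^ m = w y := by
  have hne : w a ^ i ≠ 0 := pow_ne_zero _ ha
  have h2 : w ci * w a ^ i = (w cj * w a ^ (j - i)) * w a ^ i := by
    have hx : w a ^ j = w a ^ (j - i) * w a ^ i := by
      rw [← pow_add]; congr 1; omega
    rw [heq, hx, mul_assoc]
  have h3 : w ci = w cj * w a ^ (j - i) := mul_right_cancel₀ hne h2
  have hcij : ci / cj ∈ M := M.div_mem hci hcj
  have hci0 : ci ≠ 0 := by
    intro h0
    rw [h0, w.map_zero] at h3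
    exact (mul_ne_zero ((w.ne_zero_iff).mpr hcj0) (pow_ne_zero _ ha)) h3.symm
  obtain ⟨y, hyK, hy⟩ := himm1 (ci / cj) hcij (div_ne_zero hci0 hcj0)
  have hval : w (ci / cj) = w a ^ (j - i) := by
    rw [map_div₀, h3]
    rw [mul_comm, mul_div_assoc, div_self ((w.ne_zero_iff).mpr hcj0), mul_one]
  refine ⟨y, hyK, ?_, j - i, by omega, by rw [hy, hval]⟩
  intro h0
  rw [h0, w.map_zero] at hy
  exact (pow_ne_zero _ ha) (hval ▸ hy.symm)

theorem exists_pow_eq (himm1 : ∀ e ∈ M, e ≠ 0 → ∃ y ∈ K, w y = w e)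
    {a : Ω} (hint : IntOver M a) (ha : a ≠ 0) :
    ∃ y ∈ K, y ≠ 0 ∧ ∃ m : ℕ, 1 ≤ m ∧ w a ^ m = w y := by
  obtain ⟨p, hm, hc, he⟩ := hint
  set n := p.natDegree with hn
  have hn1 : 1 ≤ n := by
    rcases Nat.eq_zero_or_pos n with h0 | h1
    · exfalso
      have : p = 1 := by
        rw [Polynomial.Monic.natDegree_eq_zero hm] at h0; exact h0
      rw [this] at he; simp at he
    · exact h1
  have hsum : ∑ i ∈ Finset.range (n + 1), p.coeff i * a ^ i = 0 := by
    rw [← Polynomial.eval_eq_sum_range, he]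
  set t : ℕ → Ω := fun i => p.coeff i * a ^ i with ht
  have hwa : w a ≠ 0 := (w.ne_zero_iff).mpr ha
  have htn : w (t n) = w a ^ n := by
    rw [ht]; simp only []
    rw [w.map_mul, Polynomial.Monic.coeff_natDegree hm, w.map_one, one_mul, w.map_pow]
  have htn0 : w (t n) ≠ 0 := by rw [htn]; exact pow_ne_zero _ hwa
  -- j : index with maximal value
  obtain ⟨j, hjmem, hjmax⟩ := Finset.exists_max_image (Finset.range (n + 1))
    (fun i => w (t i)) ⟨n, Finset.self_mem_range_succ n⟩
  have htj0 : w (t j) ≠ 0 := fun h0 => htn0 (le_antisymm (h0 ▸ hjmax n (Finset.self_mem_range_succ n)) (zero_le'))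
  obtain ⟨i, himem, hij, hle⟩ := exists_ge_of_sum_eq_zero w hsum hjmem htj0
  have heqv : w (t i) = w (t j) := le_antisymm (hjmax i himem) hle
  have hti0 : w (t i) ≠ 0 := heqv ▸ htj0
  have hcj0 : p.coeff j ≠ 0 := by
    intro h0; apply htj0; rw [ht]; simp [h0]
  have hci0 : p.coeff i ≠ 0 := by
    intro h0; apply hti0; rw [ht]; simp [h0]
  have heqw : w (p.coeff i) * w a ^ i = w (p.coeff j) * w a ^ j := by
    have := heqv
    rw [ht] at this; simp only [] at this
    rw [w.map_mul, w.map_mul, w.map_pow, w.map_pow] at this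
    exact this
  rcases lt_or_gt_of_ne hij with h | h
  · exact aux_pow_eq w himm1 (hc i) (hc j) hcj0 h hwa heqw
  · exact aux_pow_eq w himm1 (hc j) (hc i) hci0 h hwa heqw.symm

theorem exists_le_val (himm1 : ∀ e ∈ M, e ≠ 0 → ∃ y ∈ K, w y = w e)
    {a : Ω} (hint : IntOver M a) (ha : a ≠ 0) :
    ∃ y ∈ K, y ≠ 0 ∧ w y ≤ w a := by
  rcases le_or_gt 1 (w a) with h1 | h1
  · exact ⟨1, K.one_mem, one_ne_zero, by rw [w.map_one]; exact h1⟩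
  · obtain ⟨y, hyK, hy0, m, hm1, hm⟩ := exists_pow_eq w himm1 hint ha
    refine ⟨y, hyK, hy0, ?_⟩
    rw [← hm]
    calc w a ^ m ≤ w a ^ 1 := pow_le_pow_right_of_le_one' h1.le hm1
    _ = w a := pow_one _


variable {Ω Γ : Type*} [Field Ω] [LinearOrderedCommGroupWithZero Γ]
variable (w : Valuation Ω Γ) (K : Subfield Ω) (x : Ω)

/-- approximable by polynomials over K evaluated at x -/
def Approx (a : Ω) : Prop :=
  ∀ c ∈ K, c ≠ 0 → ∃ f : Polynomial Ω,
    (∀ i, f.coeff i ∈ K) ∧ w (a - Polynomial.eval x f) < w c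

variable {w K x}

theorem polyK_mul {f g : Polynomial Ω} (hf : ∀ i, f.coeff i ∈ K) (hg : ∀ i, g.coeff i ∈ K) :
    ∀ i, (f * g).coeff i ∈ K := by
  intro i
  rw [coeff_mul]
  exact Subfield.sum_mem _ fun p _ => K.mul_mem (hf _) (hg _)

theorem polyK_pow {f : Polynomial Ω} (hf : ∀ i, f.coeff i ∈ K) :
    ∀ n : ℕ, ∀ i, (f ^ n).coeff i ∈ K
  | 0 => by intro i; rw [pow_zero]; rcases Nat.eq_zero_or_pos i with h | h
            · simp [h, K.one_mem]
            · simp [coeff_one, Nat.pos_iff_ne_zero.mp h, K.zero_mem]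
  | (n+1) => by
      rw [pow_succ]
      exact polyK_mul (polyK_pow hf n) hf

theorem polyK_sum {ι : Type*} (s : Finset ι) (F : ι → Polynomial Ω)
    (hF : ∀ j ∈ s, ∀ i, (F j).coeff i ∈ K) : ∀ i, (∑ j ∈ s, F j).coeff i ∈ K := by
  intro i
  rw [Polynomial.finset_sum_coeff]
  exact Subfield.sum_mem _ fun j hj => hF j hj i

theorem polyK_C {y : Ω} (hy : y ∈ K) : ∀ i, (C y).coeff i ∈ K := by
  intro i
  rw [coeff_C]
  split <;> simp [hy, K.zero_mem]

theorem w_pos {c : Ω} (hc : c ≠ 0) : (0 : Γ) < w c :=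
  zero_lt_iff.mpr ((w.ne_zero_iff).mpr hc)

theorem approx_of_mem {a : Ω} (ha : a ∈ K) : Approx w K x a := by
  intro c _ hc0
  exact ⟨C a, polyK_C ha, by simpa using w_pos (w := w) hc0⟩

theorem approx_x : Approx w K x x := by
  intro c _ hc0
  refine ⟨X, fun i => ?_, by simpa using w_pos (w := w) hc0⟩
  rw [coeff_X]
  split <;> simp [K.one_mem, K.zero_mem]

theorem approx_zero : Approx w K x 0 := approx_of_mem K.zero_mem

theorem Approx.add {a b : Ω} (ha : Approx w K x a) (hb : Approx w K x b) :
    Approx w K x (a + b) := by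
  intro c hc hc0
  obtain ⟨f, hf, hfa⟩ := ha c hc hc0
  obtain ⟨g, hg, hgb⟩ := hb c hc hc0
  refine ⟨f + g, fun i => by rw [coeff_add]; exact K.add_mem (hf i) (hg i), ?_⟩
  have : a + b - (f + g).eval x = (a - f.eval x) + (b - g.eval x) := by
    rw [eval_add]; ring
  rw [this]
  exact lt_of_le_of_lt (w.map_add _ _) (max_lt hfa hgb)

theorem Approx.neg {a : Ω} (ha : Approx w K x a) : Approx w K x (-a) := by
  intro c hc hc0
  obtain ⟨f, hf, hfa⟩ := ha c hc hc0
  refine ⟨-f, fun i => by rw [coeff_neg]; exact K.neg_mem (hf i), ?_⟩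
  have : -a - (-f).eval x = -(a - f.eval x) := by rw [eval_neg]; ring
  rw [this, w.map_neg]
  exact hfa

/-- minimum of two K-values -/
theorem Kmin {c₁ c₂ : Ω} (h1 : c₁ ∈ K) (h10 : c₁ ≠ 0) (h2 : c₂ ∈ K) (h20 : c₂ ≠ 0) :
    ∃ c ∈ K, c ≠ 0 ∧ w c ≤ w c₁ ∧ w c ≤ w c₂ := by
  rcases le_total (w c₁) (w c₂) with h | h
  · exact ⟨c₁, h1, h10, le_refl _, h⟩
  · exact ⟨c₂, h2, h20, h, le_refl _⟩

theorem mul_lt_mul_of_lt_of_le₀ {a b c d : Γ} (hab : a ≤ b) (hb : b ≠ 0) (hcd : c < d) :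
    a * c < b * d :=
  mul_lt_mul_of_le_of_lt_of_nonneg_of_pos hab hcd zero_le' (zero_lt_iff.mpr hb)

theorem Approx.mul {a b : Ω} (ha : Approx w K x a) (hb : Approx w K x b)
    {Ya Yb : Ω} (hYaK : Ya ∈ K) (hYa0 : Ya ≠ 0) (hYa : w a ≤ w Ya)
    (hYbK : Yb ∈ K) (hYb0 : Yb ≠ 0) (hYb : w b ≤ w Yb) :
    Approx w K x (a * b) := by
  intro c hc hc0
  -- choose approximation of b at level min (c/Ya) Yb, and of a at level c/Yb
  obtain ⟨c', hc'K, hc'0, hc'1, hc'2⟩ :=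
    Kmin (w := w) (K.mul_mem hc (K.inv_mem hYaK)) (mul_ne_zero hc0 (inv_ne_zero hYa0)) hYbK hYb0
  obtain ⟨g, hg, hgb⟩ := hb c' hc'K hc'0
  obtain ⟨f, hf, hfa⟩ := ha (c * Yb⁻¹) (K.mul_mem hc (K.inv_mem hYbK))
    (mul_ne_zero hc0 (inv_ne_zero hYb0))
  refine ⟨f * g, polyK_mul hf hg, ?_⟩
  have hgval : w (g.eval x) ≤ w Yb := by
    have : g.eval x = b - (b - g.eval x) := by ring
    rw [this]
    exact Valuation.map_sub_le w hYb (le_trans hgb.le hc'2)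
  have hsplit : a * b - (f * g).eval x
      = a * (b - g.eval x) + (a - f.eval x) * g.eval x := by
    rw [eval_mul]; ring
  rw [hsplit]
  refine lt_of_le_of_lt (w.map_add _ _) (max_lt ?_ ?_)
  · -- w a * w(b - g) < w c
    rw [w.map_mul]
    calc w a * w (b - g.eval x)
        < w Ya * (w c * w Ya⁻¹) := by
          refine mul_lt_mul_of_lt_of_le₀ hYa ((w.ne_zero_iff).mpr hYa0) ?_
          calc w (b - g.eval x) < w c' := hgb
          _ ≤ w (c * Ya⁻¹) := hc'1
          _ = w c * w Ya⁻¹ := w.map_mul _ _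
    _ = w c := by
          rw [map_inv₀]
          rw [mul_comm (w c), ← mul_assoc, mul_inv_cancel₀ ((w.ne_zero_iff).mpr hYa0), one_mul]
  · -- w(a - f) * w g < w c
    rw [w.map_mul]
    calc w (a - f.eval x) * w (g.eval x)
        < (w c * w Yb⁻¹) * w Yb := by
          rw [mul_comm (w (a - f.eval x)), mul_comm (w c * w Yb⁻¹)]
          refine mul_lt_mul_of_lt_of_le₀ hgval ((w.ne_zero_iff).mpr hYb0) ?_
          calc w (a - f.eval x) < w (c * Yb⁻¹) := hfa
          _ = w c * w Yb⁻¹ := w.map_mul _ _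
    _ = w c := by
          rw [map_inv₀, mul_assoc, inv_mul_cancel₀ ((w.ne_zero_iff).mpr hYb0), mul_one]

section Inverse

variable {M : Subfield Ω}

theorem mul_lt_mul_right'₀ {a b k : Γ} (h : a < b) (hk : k ≠ 0) : a * k < b * k := by
  have hb : b ≠ 0 := fun h0 => not_lt_of_ge zero_le' (h0 ▸ h)
  have := mul_lt_mul_of_lt_of_le₀ (le_refl k) hk h
  calc a * k = k * a := mul_comm _ _
  _ < k * b := this
  _ = b * k := mul_comm _ _

/-- inverses of nonzero polynomial values are approximable -/
theorem approx_polyinv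
    (hKM : ∀ y ∈ K, y ∈ M) (hxM : x ∈ M)
    (himm1 : ∀ e ∈ M, e ≠ 0 → ∃ y ∈ K, w y = w e)
    (himm2 : ∀ e ∈ M, w e = 1 → ∃ y ∈ K, w (e - y) < 1)
    (harch : ∀ a ∈ K, ∀ b ∈ K, w a < 1 → b ≠ 0 → ∃ n : ℕ, w a ^ n < w b)
    {g : Polynomial Ω} (hg : ∀ i, g.coeff i ∈ K) (hg0 : g.eval x ≠ 0) :
    Approx w K x (g.eval x)⁻¹ := by
  intro c hc hc0
  set gv := g.eval x with hgv
  have hgvM : gv ∈ M := eval_mem_subfield (fun i => hKM _ (hg i)) hxM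
  obtain ⟨y₀, hy₀K, hy₀⟩ := himm1 gv hgvM hg0
  have hy₀0 : y₀ ≠ 0 := by
    intro h0; rw [h0, w.map_zero] at hy₀; exact (w.ne_zero_iff.mpr hg0) hy₀.symm
  have hwy₀ : w y₀ ≠ 0 := w.ne_zero_iff.mpr hy₀0
  set u := gv / y₀ with hu
  have huM : u ∈ M := M.div_mem hgvM (hKM _ hy₀K)
  have hu1 : w u = 1 := by
    rw [hu, map_div₀, hy₀, div_self (w.ne_zero_iff.mpr hg0)]
  obtain ⟨z, hzK, hz⟩ := himm2 u huM hu1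
  have hz1 : w z = 1 := by
    have := w.map_eq_of_sub_lt (x := u) (y := z) (by rw [w.map_sub_swap]; rw [hu1]; exact hz)
    rw [this, hu1]
  have hz0 : z ≠ 0 := by
    intro h0; rw [h0, w.map_zero] at hz1; exact zero_ne_one hz1
  set d := y₀ * z with hd
  have hdK : d ∈ K := K.mul_mem hy₀K hzK
  have hd0 : d ≠ 0 := mul_ne_zero hy₀0 hz0
  have hwd : w d = w y₀ := by rw [hd, w.map_mul, hz1, mul_one]
  set E : Polynomial Ω := 1 - C d⁻¹ * g with hE
  have hEK : ∀ i, E.coeff i ∈ K := by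
    intro i
    rw [hE, coeff_sub]
    refine K.sub_mem ?_ (polyK_mul (polyK_C (K.inv_mem hdK)) hg i)
    rw [← C_1, coeff_C]
    split <;> simp [K.one_mem, K.zero_mem]
  set e := E.eval x with he
  have heval : e = 1 - d⁻¹ * gv := by rw [he, hE]; simp; exact Or.inl rfl
  have hgde : gv * d⁻¹ = 1 - e := by rw [heval]; ring
  have he1 : w e < 1 := by
    have hee : e = (z - u) / z := by
      rw [heval, hu, hd]
      field_simp
    rw [hee, map_div₀, hz1, div_one, w.map_sub_swap]
    exact hz
  have heM : e ∈ M := eval_mem_subfield (fun i => hKM _ (hEK i)) hxM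
  -- the approximating polynomials
  have key : ∀ n : ℕ, ∃ p : Polynomial Ω, (∀ i, p.coeff i ∈ K) ∧
      gv⁻¹ - p.eval x = gv⁻¹ * e ^ n := by
    intro n
    refine ⟨(∑ k ∈ Finset.range n, E ^ k) * C d⁻¹,
      polyK_mul (polyK_sum _ _ fun j _ => polyK_pow hEK j) (polyK_C (K.inv_mem hdK)), ?_⟩
    have hpe : ((∑ k ∈ Finset.range n, E ^ k) * C d⁻¹).eval x
        = (∑ k ∈ Finset.range n, e ^ k) * d⁻¹ := by
      rw [eval_mul, eval_C, eval_finset_sum]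
      congr 1
      refine Finset.sum_congr rfl fun k _ => ?_
      rw [eval_pow, he]
    rw [hpe]
    have hgeom := geom_sum_mul e n
    have hginv : gv⁻¹ * gv = 1 := inv_mul_cancel₀ hg0
    have h1 : gv * ((∑ k ∈ Finset.range n, e ^ k) * d⁻¹) = 1 - e ^ n := by
      have h2 : gv * ((∑ k ∈ Finset.range n, e ^ k) * d⁻¹)
          = (gv * d⁻¹) * (∑ k ∈ Finset.range n, e ^ k) := by ring
      rw [h2, hgde]
      linear_combination -hgeom
    linear_combination (-(gv⁻¹)) * h1 + ((∑ k ∈ Finset.range n, e ^ k) * d⁻¹) * hginv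
  -- choose n making the error small
  rcases eq_or_ne e 0 with he0 | he0
  · obtain ⟨p, hpK, hpe⟩ := key 1
    refine ⟨p, hpK, ?_⟩
    rw [hpe, he0]
    simpa using w_pos (w := w) hc0
  · obtain ⟨s, hsK, hs⟩ := himm1 e heM he0
    have hs1 : w s < 1 := by rw [hs]; exact he1
    obtain ⟨n, hn⟩ := harch s hsK (c * y₀) (K.mul_mem hc hy₀K) hs1 (mul_ne_zero hc0 hy₀0)
    obtain ⟨p, hpK, hpe⟩ := key n
    refine ⟨p, hpK, ?_⟩
    rw [hpe, w.map_mul, map_inv₀, w.map_pow]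
    rw [show w gv = w y₀ from hy₀.symm]
    have hn' : w e ^ n < w c * w y₀ := by
      rw [← hs]
      calc w s ^ n < w (c * y₀) := hn
      _ = w c * w y₀ := w.map_mul _ _
    calc (w y₀)⁻¹ * w e ^ n = w e ^ n * (w y₀)⁻¹ := mul_comm _ _
    _ < (w c * w y₀) * (w y₀)⁻¹ := mul_lt_mul_right'₀ hn' (inv_ne_zero hwy₀)
    _ = w c := mul_inv_cancel_right₀ hwy₀ _

/-- inverses of approximable integral elements are approximable -/
theorem Approx.inv
    (hKM : ∀ y ∈ K, y ∈ M) (hxM : x ∈ M)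
    (himm1 : ∀ e ∈ M, e ≠ 0 → ∃ y ∈ K, w y = w e)
    (himm2 : ∀ e ∈ M, w e = 1 → ∃ y ∈ K, w (e - y) < 1)
    (harch : ∀ a ∈ K, ∀ b ∈ K, w a < 1 → b ≠ 0 → ∃ n : ℕ, w a ^ n < w b)
    {a : Ω} (ha : Approx w K x a) (hint : IntOver M a) (ha0 : a ≠ 0) :
    Approx w K x a⁻¹ := by
  intro c hc hc0
  obtain ⟨c₀, hc₀K, hc₀0, hc₀⟩ := exists_le_val w himm1 hint ha0
  have hwc₀ : w c₀ ≠ 0 := w.ne_zero_iff.mpr hc₀0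
  obtain ⟨c', hc'K, hc'0, hc'1, hc'2⟩ := Kmin (w := w)
    (K.mul_mem (K.mul_mem hc hc₀K) hc₀K) (mul_ne_zero (mul_ne_zero hc0 hc₀0) hc₀0)
    hc₀K hc₀0
  obtain ⟨g, hgK, hga⟩ := ha c' hc'K hc'0
  have hsmall : w (a - g.eval x) < w a := lt_of_lt_of_le hga (le_trans hc'2 hc₀)
  have hg0 : g.eval x ≠ 0 := by
    intro h0
    rw [h0, sub_zero] at hsmall
    exact lt_irrefl _ hsmall
  have hgval : w (g.eval x) = w a :=
    w.map_eq_of_sub_lt (by rw [w.map_sub_swap]; exact hsmall)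
  have hdiff : a⁻¹ - (g.eval x)⁻¹ = (g.eval x - a) * (a⁻¹ * (g.eval x)⁻¹) := by
    field_simp
  have hlt1 : w (a⁻¹ - (g.eval x)⁻¹) < w c := by
    rw [hdiff, w.map_mul, w.map_mul, map_inv₀, map_inv₀, hgval, w.map_sub_swap]
    have hAne : w a ≠ 0 := w.ne_zero_iff.mpr ha0
    have hBA : w c₀ * w c₀ ≤ w a * w a := mul_le_mul' hc₀ hc₀
    have hinv : (w a)⁻¹ * (w a)⁻¹ ≤ (w c₀)⁻¹ * (w c₀)⁻¹ := by
      rw [← mul_inv, ← mul_inv]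
      exact (inv_le_inv₀ (zero_lt_iff.mpr (mul_ne_zero hAne hAne))
        (zero_lt_iff.mpr (mul_ne_zero hwc₀ hwc₀))).mpr hBA
    have hkne : (w c₀)⁻¹ * (w c₀)⁻¹ ≠ 0 := mul_ne_zero (inv_ne_zero hwc₀) (inv_ne_zero hwc₀)
    calc w (a - g.eval x) * ((w a)⁻¹ * (w a)⁻¹)
        ≤ w (a - g.eval x) * ((w c₀)⁻¹ * (w c₀)⁻¹) := mul_le_mul' (le_refl _) hinv
    _ < w (c * c₀ * c₀) * ((w c₀)⁻¹ * (w c₀)⁻¹) :=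
        mul_lt_mul_right'₀ (lt_of_lt_of_le hga hc'1) hkne
    _ = w c := by
        rw [w.map_mul, w.map_mul, ← mul_assoc, mul_inv_cancel_right₀ hwc₀,
          mul_inv_cancel_right₀ hwc₀]
  obtain ⟨q, hqK, hq⟩ := approx_polyinv hKM hxM himm1 himm2 harch hgK hg0 c hc hc0
  refine ⟨q, hqK, ?_⟩
  have hsplit : a⁻¹ - q.eval x = (a⁻¹ - (g.eval x)⁻¹) + ((g.eval x)⁻¹ - q.eval x) := by ring
  rw [hsplit]
  exact lt_of_le_of_lt (w.map_add _ _) (max_lt hlt1 hq)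

end Inverse

section Dfield

variable {M : Subfield Ω}

theorem exists_ge_val (himm1 : ∀ e ∈ M, e ≠ 0 → ∃ y ∈ K, w y = w e)
    {a : Ω} (hint : IntOver M a) : ∃ Y ∈ K, Y ≠ 0 ∧ w a ≤ w Y := by
  rcases eq_or_ne a 0 with rfl | ha0
  · exact ⟨1, K.one_mem, one_ne_zero, by rw [w.map_zero]; exact zero_le'⟩
  · obtain ⟨y, hyK, hy0, hy⟩ := exists_le_val w himm1 hint.inv (inv_ne_zero ha0)
    rw [map_inv₀] at hy
    refine ⟨y⁻¹, K.inv_mem hyK, inv_ne_zero hy0, ?_⟩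
    rw [map_inv₀]
    have hwa : (0:Γ) < w a := zero_lt_iff.mpr (w.ne_zero_iff.mpr ha0)
    have hwy : (0:Γ) < w y := zero_lt_iff.mpr (w.ne_zero_iff.mpr hy0)
    calc w a = ((w a)⁻¹)⁻¹ := (inv_inv _).symm
    _ ≤ (w y)⁻¹ := (inv_le_inv₀ (zero_lt_iff.mpr (inv_ne_zero (ne_of_gt hwa))) hwy).mpr hy

variable (w K x M)

/-- The candidate henselian subfield: approximable elements integral over M. -/
def Dsub (hKM : ∀ y ∈ K, y ∈ M) (hxM : x ∈ M)
    (himm1 : ∀ e ∈ M, e ≠ 0 → ∃ y ∈ K, w y = w e)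
    (himm2 : ∀ e ∈ M, w e = 1 → ∃ y ∈ K, w (e - y) < 1)
    (harch : ∀ a ∈ K, ∀ b ∈ K, w a < 1 → b ≠ 0 → ∃ n : ℕ, w a ^ n < w b) :
    Subfield Ω where
  carrier := {a | Approx w K x a ∧ IntOver M a}
  zero_mem' := ⟨approx_zero, IntOver.of_mem M.zero_mem⟩
  one_mem' := ⟨approx_of_mem K.one_mem, IntOver.of_mem M.one_mem⟩
  add_mem' := fun ha hb => ⟨ha.1.add hb.1, ha.2.add hb.2⟩
  neg_mem' := fun ha => ⟨ha.1.neg, ha.2.neg⟩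
  mul_mem' := fun {a} {b} ha hb => by
    obtain ⟨Ya, hYaK, hYa0, hYa⟩ := exists_ge_val himm1 ha.2
    obtain ⟨Yb, hYbK, hYb0, hYb⟩ := exists_ge_val himm1 hb.2
    exact ⟨ha.1.mul hb.1 hYaK hYa0 hYa hYbK hYb0 hYb, ha.2.mul hb.2⟩
  inv_mem' := fun a ha => by
    rcases eq_or_ne a 0 with rfl | ha0
    · rw [inv_zero]
      exact ⟨approx_zero, IntOver.of_mem M.zero_mem⟩
    · exact ⟨ha.1.inv hKM hxM himm1 himm2 harch ha.2 ha0, ha.2.inv⟩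

variable {w K x M}

theorem mem_Dsub {hKM hxM himm1 himm2 harch} {a : Ω} :
    a ∈ Dsub w K x M hKM hxM himm1 himm2 harch ↔ Approx w K x a ∧ IntOver M a :=
  Iff.rfl

end Dfield

section HenselAux

/-- a multiset of values bounds its min to the card-th power by the product -/
theorem multiset_pow_card_le_prod (μ : Multiset Γ) (hμ : μ ≠ 0) :
    ∃ v ∈ μ, v ^ Multiset.card μ ≤ μ.prod := by
  induction μ using Multiset.induction_on with
  | empty => exact absurd rfl hμ
  | cons a t ih =>
    rcases eq_or_ne t 0 with rfl | ht0
    · exact ⟨a, Multiset.mem_cons_self a 0, by simp⟩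
    · obtain ⟨v, hv, hle⟩ := ih ht0
      rcases le_total a v with h | h
      · refine ⟨a, Multiset.mem_cons_self a t, ?_⟩
        rw [Multiset.card_cons, Multiset.prod_cons, pow_succ, mul_comm]
        exact mul_le_mul' (le_refl a) (le_trans (pow_le_pow_left' h _) hle)
      · refine ⟨v, Multiset.mem_cons_of_mem hv, ?_⟩
        rw [Multiset.card_cons, Multiset.prod_cons, pow_succ, mul_comm]
        exact mul_le_mul' h hle

/-- taylor expansion with integral remainder coefficient -/
theorem binom_bounded {F : Polynomial Ω} (hc : ∀ i, w (F.coeff i) ≤ 1)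
    {s t : Ω} (hs : w s ≤ 1) (ht : w t ≤ 1) :
    ∃ k : Ω, w k ≤ 1 ∧
      F.eval (s + t) = F.eval s + F.derivative.eval s * t + k * t ^ 2 := by
  have hsub : (↑F.coeffs : Set Ω) ⊆ ↑(w.integer) := by
    intro y hy
    rw [Finset.mem_coe, Polynomial.mem_coeffs_iff] at hy
    obtain ⟨n, _, rfl⟩ := hy
    exact hc n
  set F0 := F.toSubring w.integer hsub with hF0
  have hmap : F0.map (Subring.subtype w.integer) = F := Polynomial.map_toSubring _ _ _
  have coe_eval : ∀ (p : Polynomial w.integer) (u : w.integer),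
      ((p.eval u : w.integer) : Ω) = (p.map (Subring.subtype w.integer)).eval (u : Ω) := by
    intro p u
    rw [Polynomial.eval_map]
    exact (Polynomial.eval₂_at_apply (w.integer.subtype) u).symm
  set s0 : w.integer := ⟨s, hs⟩ with hs0
  set t0 : w.integer := ⟨t, ht⟩ with ht0
  obtain ⟨k0, hk0⟩ := F0.binomExpansion s0 t0
  refine ⟨(k0 : Ω), k0.2, ?_⟩
  have e1 : ((F0.eval (s0 + t0) : w.integer) : Ω) = F.eval (s + t) := by
    rw [coe_eval, hmap]; rfl
  have e2 : ((F0.eval s0 : w.integer) : Ω) = F.eval s := by rw [coe_eval, hmap]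
  have e3 : ((F0.derivative.eval s0 : w.integer) : Ω) = F.derivative.eval s := by
    rw [coe_eval, ← Polynomial.derivative_map, hmap]
  calc F.eval (s + t) = ((F0.eval (s0 + t0) : w.integer) : Ω) := e1.symm
  _ = ((F0.eval s0 + F0.derivative.eval s0 * t0 + k0 * t0 ^ 2 : w.integer) : Ω) := by rw [hk0]
  _ = ((F0.eval s0 : w.integer) : Ω) + ((F0.derivative.eval s0 : w.integer) : Ω) * t
        + (k0 : Ω) * t ^ 2 := by push_cast; rfl
  _ = F.eval s + F.derivative.eval s * t + (k0 : Ω) * t ^ 2 := by rw [e2, e3]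

end HenselAux

section HenselMain

variable {M : Subfield Ω}

theorem val_eval_eq_prod (F : Polynomial Ω)
    (hsplit : F = (F.roots.map fun a => X - C a).prod) (u : Ω) :
    w (F.eval u) = (F.roots.map fun r => w (u - r)).prod := by
  calc w (F.eval u) = w (((F.roots.map fun a => X - C a).prod).eval u) := by rw [← hsplit]
  _ = w ((F.roots.map fun a => (X - C a).eval u).prod) := by
      rw [Polynomial.eval_multiset_prod, Multiset.map_map]; rfl
  _ = (F.roots.map fun a => w ((X - C a).eval u)).prod := by
      rw [map_multiset_prod, Multiset.map_map]; rfl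
  _ = (F.roots.map fun r => w (u - r)).prod := by
      refine congrArg Multiset.prod (Multiset.map_congr rfl fun a _ => ?_)
      simp

theorem eventually_pow_lt
    (himm1 : ∀ e ∈ M, e ≠ 0 → ∃ y ∈ K, w y = w e)
    (harch : ∀ a ∈ K, ∀ b ∈ K, w a < 1 → b ≠ 0 → ∃ n : ℕ, w a ^ n < w b)
    {ε : Γ} (hε : ε < 1)
    (hcase : ε = 0 ∨ ∃ fa : Ω, fa ≠ 0 ∧ IntOver M fa ∧ w fa = ε)
    {b : Ω} (hbK : b ∈ K) (hb0 : b ≠ 0) :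
    ∃ N : ℕ, ∀ n : ℕ, N ≤ n → ε ^ 2 ^ n < w b := by
  rcases hcase with rfl | ⟨fa, hfa0, hint, rfl⟩
  · exact ⟨0, fun n _ => by
      rw [zero_pow (Nat.two_pow_pos n).ne']
      exact w_pos (w := w) hb0⟩
  · obtain ⟨y, hyK, hy0, m, hm1, hym⟩ := exists_pow_eq w himm1 hint hfa0
    have hfale : w fa ^ m ≤ w fa := by
      calc w fa ^ m ≤ w fa ^ 1 := pow_le_pow_right_of_le_one' hε.le hm1
      _ = w fa := pow_one _
    have hy1 : w y < 1 := by rw [← hym]; exact lt_of_le_of_lt hfale hε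
    obtain ⟨j, hj⟩ := harch y hyK b hbK hy1 hb0
    refine ⟨m * (j + 1), fun n hn => ?_⟩
    have h1 : w fa ^ (m * (j + 1)) = w y ^ (j + 1) := by rw [← hym, ← pow_mul]
    have h2 : w y ^ (j + 1) ≤ w y ^ j := pow_le_pow_right_of_le_one' hy1.le (Nat.le_succ j)
    have h3 : w fa ^ 2 ^ n ≤ w fa ^ (m * (j + 1)) := by
      refine pow_le_pow_right_of_le_one' hε.le ?_
      calc m * (j + 1) ≤ 2 ^ (m * (j + 1)) := le_of_lt Nat.lt_two_pow_self
      _ ≤ 2 ^ n := Nat.pow_le_pow_right (by norm_num) hn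
    calc w fa ^ 2 ^ n ≤ w fa ^ (m * (j + 1)) := h3
    _ = w y ^ (j + 1) := h1
    _ ≤ w y ^ j := h2
    _ < w b := hj

end HenselMain

section HenselRoot

variable [IsAlgClosed Ω] {M : Subfield Ω}

theorem hensel_root
    (hKM : ∀ y ∈ K, y ∈ M) (hxM : x ∈ M)
    (himm1 : ∀ e ∈ M, e ≠ 0 → ∃ y ∈ K, w y = w e)
    (himm2 : ∀ e ∈ M, w e = 1 → ∃ y ∈ K, w (e - y) < 1)
    (harch : ∀ a ∈ K, ∀ b ∈ K, w a < 1 → b ≠ 0 → ∃ n : ℕ, w a ^ n < w b)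
    (hMD : M ≤ Dsub w K x M hKM hxM himm1 himm2 harch)
    {t : Ω} (htK : t ∈ K) (ht0 : t ≠ 0) (ht1 : w t < 1)
    {F : Polynomial Ω} (hF : F.Monic)
    (hcD : ∀ i, F.coeff i ∈ Dsub w K x M hKM hxM himm1 himm2 harch)
    (hc1 : ∀ i, w (F.coeff i) ≤ 1)
    {A₀ : Ω} (hA₀D : A₀ ∈ Dsub w K x M hKM hxM himm1 himm2 harch) (hA₀1 : w A₀ ≤ 1)
    (hev : w (F.eval A₀) < 1) (hev' : w (F.derivative.eval A₀) = 1) :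
    ∃ r : Ω, F.eval r = 0 ∧ r ∈ Dsub w K x M hKM hxM himm1 himm2 harch ∧
      w r ≤ 1 ∧ w (r - A₀) < 1 := by
  classical
  set D := Dsub w K x M hKM hxM himm1 himm2 harch with hDdef
  set ε := w (F.eval A₀) with hε
  have hcD' : ∀ i, F.derivative.coeff i ∈ D := fun i => by
    rw [Polynomial.coeff_derivative, show ((i : Ω) + 1) = ((i + 1 : ℕ) : Ω) by push_cast; ring]
    exact D.mul_mem (hcD _) (natCast_mem D _)
  have hc1' : ∀ i, w (F.derivative.coeff i) ≤ 1 := fun i => by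
    rw [Polynomial.coeff_derivative, show ((i : Ω) + 1) = ((i + 1 : ℕ) : Ω) by push_cast; ring,
      w.map_mul]
    exact mul_le_one' (hc1 _) (val_natCast_le_one w _)
  have hc1'' : ∀ i, w (F.derivative.derivative.coeff i) ≤ 1 := fun i => by
    rw [Polynomial.coeff_derivative, show ((i : Ω) + 1) = ((i + 1 : ℕ) : Ω) by push_cast; ring,
      w.map_mul]
    exact mul_le_one' (hc1' _) (val_natCast_le_one w _)
  -- Newton iteration
  set step : Ω → Ω := fun b => b + (-(F.eval b) / F.derivative.eval b) with hstep
  set seq : ℕ → Ω := fun n => step^[n] A₀ with hseqdef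
  have hseq0 : seq 0 = A₀ := rfl
  have hseqS : ∀ n, seq (n + 1) = seq n + (-(F.eval (seq n)) / F.derivative.eval (seq n)) :=
    fun n => Function.iterate_succ_apply' step n A₀
  have inv : ∀ n, seq n ∈ D ∧ w (seq n) ≤ 1 ∧ w (seq n - A₀) ≤ ε ∧
      w (F.eval (seq n)) ≤ ε ^ 2 ^ n ∧ w (F.derivative.eval (seq n)) = 1 := by
    intro n
    induction n with
    | zero =>
      refine ⟨hA₀D, hA₀1, ?_, ?_, hev'⟩
      · rw [hseq0, sub_self, w.map_zero]; exact zero_le'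
      · rw [hseq0, pow_zero, pow_one]
    | succ n ih =>
      obtain ⟨hbD, hb1, hbA, hFb, hF'b⟩ := ih
      have hF'b0 : F.derivative.eval (seq n) ≠ 0 := by
        intro h0; rw [h0, w.map_zero] at hF'b; exact zero_ne_one hF'b
      set b := seq n with hb
      set h := -(F.eval b) / F.derivative.eval b with hh
      have hwh : w h = w (F.eval b) := by
        rw [hh, map_div₀, w.map_neg, hF'b, div_one]
      have hε1 : ε ≤ 1 := le_of_lt hev
      have hpow_le : ε ^ 2 ^ n ≤ ε := by
        calc ε ^ 2 ^ n ≤ ε ^ 1 := pow_le_pow_right_of_le_one' hε1 Nat.one_le_two_pow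
        _ = ε := pow_one ε
      have hwh_le : w h ≤ ε := by rw [hwh]; exact le_trans hFb hpow_le
      have hwh1 : w h ≤ 1 := le_trans hwh_le hε1
      have hwh_lt1 : w h < 1 := lt_of_le_of_lt hwh_le hev
      have hFevD : F.eval b ∈ D := eval_mem_subfield hcD hbD
      have hF'evD : F.derivative.eval b ∈ D := eval_mem_subfield hcD' hbD
      have hhD : h ∈ D := D.div_mem (D.neg_mem hFevD) hF'evD
      have hnew : seq (n + 1) = b + h := hseqS n
      have hDmem : seq (n + 1) ∈ D := by rw [hnew]; exact D.add_mem hbD hhD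
      have h1le : w (seq (n + 1)) ≤ 1 := by
        rw [hnew]; exact le_trans (w.map_add _ _) (max_le hb1 hwh1)
      have hAle : w (seq (n + 1) - A₀) ≤ ε := by
        rw [hnew, show b + h - A₀ = (b - A₀) + h by ring]
        exact le_trans (w.map_add _ _) (max_le hbA hwh_le)
      obtain ⟨k, hk1, hkeq⟩ := binom_bounded (w := w) hc1 hb1 hwh1
      have hcancel : F.eval b + F.derivative.eval b * h = 0 := by
        rw [hh]; field_simp; ring
      have hFnew : F.eval (seq (n + 1)) = k * h ^ 2 := by
        rw [hnew, hkeq]; linear_combination hcancel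
      have hFnewval : w (F.eval (seq (n + 1))) ≤ ε ^ 2 ^ (n + 1) := by
        rw [hFnew, w.map_mul, w.map_pow, hwh]
        calc w k * w (F.eval b) ^ 2 ≤ 1 * (ε ^ 2 ^ n) ^ 2 :=
          mul_le_mul' hk1 (pow_le_pow_left' hFb 2)
        _ = ε ^ 2 ^ (n + 1) := by rw [one_mul, ← pow_mul, pow_succ]
      obtain ⟨k', hk'1, hk'eq⟩ := binom_bounded (w := w) hc1' hb1 hwh1
      have hF''le : w (F.derivative.derivative.eval b) ≤ 1 :=
        val_eval_le_one w hc1'' hb1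
      have hsmall : w (F.derivative.derivative.eval b * h + k' * h ^ 2) < 1 := by
        refine lt_of_le_of_lt (w.map_add _ _) (max_lt ?_ ?_)
        · rw [w.map_mul]
          calc w (F.derivative.derivative.eval b) * w h ≤ 1 * w h :=
            mul_le_mul' hF''le (le_refl _)
          _ = w h := one_mul _
          _ < 1 := hwh_lt1
        · rw [w.map_mul, w.map_pow]
          calc w k' * w h ^ 2 ≤ 1 * (1 * w h) := by
                refine mul_le_mul' hk'1 ?_
                rw [pow_two]
                exact mul_le_mul' hwh1 (le_refl _)
          _ = w h := by rw [one_mul, one_mul]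
          _ < 1 := hwh_lt1
      have hF'new : w (F.derivative.eval (seq (n + 1))) = 1 := by
        rw [hnew, hk'eq, show F.derivative.eval b + F.derivative.derivative.eval b * h
              + k' * h ^ 2 = F.derivative.eval b
              + (F.derivative.derivative.eval b * h + k' * h ^ 2) by ring]
        rw [Valuation.map_add_eq_of_lt_left w (by rw [hF'b]; exact hsmall)]
        exact hF'b
      exact ⟨hDmem, h1le, hAle, hFnewval, hF'new⟩
  -- factor F over the algebraically closed field
  have hsplit : F = (F.roots.map fun a => X - C a).prod :=
    (IsAlgClosed.splits F).eq_prod_roots_of_monic hF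
  have hroots0 : F.roots ≠ 0 := by
    intro h0
    rw [h0] at hsplit
    simp only [Multiset.map_zero, Multiset.prod_zero] at hsplit
    rw [hε, hsplit] at hev
    simp at hev
  -- select a root infinitely often
  have hsel : ∀ ℓ : ℕ, ∃ p : {r // r ∈ F.roots.toFinset},
      ∃ n : ℕ, w (seq n - (p : Ω)) < w t ^ (ℓ + 1) := by
    intro ℓ
    set d := Multiset.card F.roots with hd
    have hbK : t ^ (ℓ + 1) ∈ K := K.pow_mem htK _
    have hb0 : t ^ (ℓ + 1) ≠ 0 := pow_ne_zero _ ht0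
    obtain ⟨N, hN⟩ := eventually_pow_lt himm1 harch hev
      (by
        rcases eq_or_ne (F.eval A₀) 0 with h0 | h0
        · left; rw [hε, h0, w.map_zero]
        · right
          exact ⟨F.eval A₀, h0, (mem_Dsub.mp (eval_mem_subfield hcD hA₀D)).2, rfl⟩)
      (K.pow_mem hbK d) (pow_ne_zero _ hb0)
    obtain ⟨_, _, _, hFN, _⟩ := inv N
    set μ := F.roots.map fun r => w (seq N - r) with hμ
    have hμ0 : μ ≠ 0 := by
      rw [hμ]
      intro h0
      exact hroots0 (Multiset.map_eq_zero.mp h0)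
    obtain ⟨v, hvμ, hvle⟩ := multiset_pow_card_le_prod μ hμ0
    have hcard : Multiset.card μ = d := by rw [hμ, Multiset.card_map]
    have hvd : v ^ d < w (t ^ (ℓ + 1)) ^ d := by
      calc v ^ d = v ^ Multiset.card μ := by rw [hcard]
      _ ≤ μ.prod := hvle
      _ = w (F.eval (seq N)) := by rw [hμ]; exact (val_eval_eq_prod (w := w) F hsplit (seq N)).symm
      _ ≤ ε ^ 2 ^ N := hFN
      _ < w ((t ^ (ℓ + 1)) ^ d) := hN N (le_refl N)
      _ = w (t ^ (ℓ + 1)) ^ d := w.map_pow _ _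
    have hv : v < w (t ^ (ℓ + 1)) := by
      by_contra hge
      push_neg at hge
      exact absurd hvd (not_lt_of_ge (pow_le_pow_left' hge d))
    obtain ⟨r, hrmem, hrv⟩ := Multiset.mem_map.mp hvμ
    refine ⟨⟨r, Multiset.mem_toFinset.mpr hrmem⟩, N, ?_⟩
    rw [hrv]
    rw [w.map_pow] at hv
    exact hv
  choose φ hφ using hsel
  obtain ⟨p, hp⟩ := Finite.exists_infinite_fiber φ
  have hpinf : (φ ⁻¹' {p} : Set ℕ).Infinite := Set.infinite_coe_iff.mp hp
  set r := (p : Ω) with hrdef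
  have hrroot : r ∈ F.roots := Multiset.mem_toFinset.mp p.2
  have hFr : F.eval r = 0 := (Polynomial.mem_roots'.mp hrroot).2
  have hclose : ∀ ℓ₀ : ℕ, ∃ n, w (seq n - r) < w t ^ (ℓ₀ + 1) := by
    intro ℓ₀
    obtain ⟨ℓ, hmem, hℓ⟩ := hpinf.exists_gt ℓ₀
    have hφℓ : φ ℓ = p := hmem
    obtain ⟨n, hn⟩ := hφ ℓ
    rw [hφℓ] at hn
    refine ⟨n, lt_of_lt_of_le hn ?_⟩
    exact pow_le_pow_right_of_le_one' ht1.le (by omega)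
  have hwtpow : ∀ ℓ : ℕ, w t ^ (ℓ + 1) < 1 := by
    intro ℓ
    calc w t ^ (ℓ + 1) ≤ w t ^ 1 := pow_le_pow_right_of_le_one' ht1.le (by omega)
    _ = w t := pow_one _
    _ < 1 := ht1
  have hrA : Approx w K x r := by
    intro c hc hc0
    obtain ⟨j, hj⟩ := harch t htK c hc ht1 hc0
    obtain ⟨n, hn⟩ := hclose j
    have h1 : w (seq n - r) < w c := by
      refine lt_of_lt_of_le hn ?_
      calc w t ^ (j + 1) ≤ w t ^ j := pow_le_pow_right_of_le_one' ht1.le (Nat.le_succ j)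
      _ ≤ w c := hj.le
    obtain ⟨f, hfK, hf⟩ := (mem_Dsub.mp (inv n).1).1 c hc hc0
    refine ⟨f, hfK, ?_⟩
    rw [show r - f.eval x = -(seq n - r) + (seq n - f.eval x) by ring]
    refine lt_of_le_of_lt (w.map_add _ _) (max_lt ?_ hf)
    rw [w.map_neg]
    exact h1
  have hrle1 : w r ≤ 1 := by
    obtain ⟨n, hn⟩ := hclose 0
    have h1 : w (r - seq n) < 1 := by
      rw [w.map_sub_swap]
      exact lt_trans hn (hwtpow 0)
    rw [show r = seq n + (r - seq n) by ring]
    exact le_trans (w.map_add _ _) (max_le (inv n).2.1 h1.le)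
  have hrsubA : w (r - A₀) < 1 := by
    obtain ⟨n, hn⟩ := hclose 0
    have h1 : w (r - seq n) < 1 := by
      rw [w.map_sub_swap]
      exact lt_trans hn (hwtpow 0)
    rw [show r - A₀ = (r - seq n) + (seq n - A₀) by ring]
    exact lt_of_le_of_lt (w.map_add _ _)
      (max_lt h1 (lt_of_le_of_lt (inv n).2.2.1 hev))
  have hrint : IntOver M r :=
    IntOver.trans hMD (fun d hd => (mem_Dsub.mp hd).2) hF hcD hFr
  exact ⟨r, hFr, mem_Dsub.mpr ⟨hrA, hrint⟩, hrle1, hrsubA⟩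

end HenselRoot

section Final

variable [IsAlgClosed Ω] {M : Subfield Ω}

theorem Dsub_isHenselian
    (hKM : ∀ y ∈ K, y ∈ M) (hxM : x ∈ M)
    (himm1 : ∀ e ∈ M, e ≠ 0 → ∃ y ∈ K, w y = w e)
    (himm2 : ∀ e ∈ M, w e = 1 → ∃ y ∈ K, w (e - y) < 1)
    (harch : ∀ a ∈ K, ∀ b ∈ K, w a < 1 → b ≠ 0 → ∃ n : ℕ, w a ^ n < w b)
    (hMD : M ≤ Dsub w K x M hKM hxM himm1 himm2 harch)
    {t : Ω} (htK : t ∈ K) (ht0 : t ≠ 0) (ht1 : w t < 1) :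
    Subfield.IsHenselian w (Dsub w K x M hKM hxM himm1 himm2 harch) := by
  set D := Dsub w K x M hKM hxM himm1 himm2 harch with hDdef
  set v := w.comap D.subtype with hvdef
  set R := v.valuationSubring with hRdef
  set ι : R →+* Ω := D.subtype.comp R.subtype with hι
  have hι_apply : ∀ e : R, ι e = ((e : D) : Ω) := fun e => rfl
  have hι_le : ∀ e : R, w (ι e) ≤ 1 := fun e => e.2
  have hι_inj : Function.Injective ι := fun u u' h => by
    apply Subtype.ext; apply Subtype.ext; exact h
  have hunit : ∀ e : R, IsUnit e ↔ w (ι e) = 1 := by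
    intro e
    constructor
    · rintro ⟨u, rfl⟩
      have h1 : (u : R) * (u⁻¹ : Rˣ) = 1 := by
        rw [← Units.val_mul, mul_inv_cancel, Units.val_one]
      have h2 : w (ι u) * w (ι ((u⁻¹ : Rˣ) : R)) = 1 := by
        rw [← w.map_mul, ← map_mul ι, h1, map_one ι, w.map_one]
      have h3 := hι_le (u : R)
      have h4 := hι_le ((u⁻¹ : Rˣ) : R)
      refine le_antisymm h3 ?_
      calc (1 : Γ) = w (ι u) * w (ι ((u⁻¹ : Rˣ) : R)) := h2.symm
      _ ≤ w (ι u) * 1 := mul_le_mul' (le_refl _) h4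
      _ = w (ι u) := mul_one _
    · intro h1
      have h0 : ι e ≠ 0 := by
        intro h0'; rw [h0', w.map_zero] at h1; exact zero_ne_one h1
      have hinvD : (ι e)⁻¹ ∈ D := D.inv_mem (e : D).2
      have hinvle : v (⟨(ι e)⁻¹, hinvD⟩ : D) ≤ 1 := by
        show w ((ι e)⁻¹) ≤ 1
        rw [map_inv₀, h1, inv_one]
      refine IsUnit.of_mul_eq_one (a := e) ⟨⟨(ι e)⁻¹, hinvD⟩, hinvle⟩ ?_
      apply hι_inj
      rw [map_mul ι, map_one ι]
      show (ι e) * (ι e)⁻¹ = 1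
      exact mul_inv_cancel₀ h0
  have hmax : ∀ e : R, e ∈ IsLocalRing.maximalIdeal R ↔ w (ι e) < 1 := by
    intro e
    rw [IsLocalRing.mem_maximalIdeal, mem_nonunits_iff, hunit e]
    constructor
    · intro h; exact lt_of_le_of_ne (hι_le e) h
    · intro h; exact ne_of_lt h
  refine { is_henselian := ?_ }
  intro f hf a₀ h₁ h₂
  set F := f.map ι with hF
  have hFm : F.Monic := hf.map ι
  have hevalc : ∀ (g : Polynomial R) (e : R), (g.map ι).eval (ι e) = ι (g.eval e) := by
    intro g e
    rw [Polynomial.eval_map]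
    exact Polynomial.eval₂_at_apply ι e
  have hcD : ∀ i, F.coeff i ∈ D := fun i => by
    rw [hF, Polynomial.coeff_map, hι_apply]
    exact ((f.coeff i : D)).2
  have hc1 : ∀ i, w (F.coeff i) ≤ 1 := fun i => by
    rw [hF, Polynomial.coeff_map]
    exact hι_le _
  have hA₀D : ι a₀ ∈ D := (a₀ : D).2
  have hA₀1 : w (ι a₀) ≤ 1 := hι_le a₀
  have hev : w (F.eval (ι a₀)) < 1 := by
    rw [hF, hevalc f a₀]
    exact (hmax _).mp h₁
  have hev' : w (F.derivative.eval (ι a₀)) = 1 := by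
    rw [hF, Polynomial.derivative_map, hevalc f.derivative a₀]
    exact (hunit _).mp h₂
  obtain ⟨r, hr0, hrD, hr1, hrA⟩ := hensel_root hKM hxM himm1 himm2 harch hMD htK ht0 ht1
    hFm hcD hc1 hA₀D hA₀1 hev hev'
  have hrv : v (⟨r, hrD⟩ : D) ≤ 1 := hr1
  set a : R := ⟨⟨r, hrD⟩, hrv⟩ with ha
  refine ⟨a, ?_, ?_⟩
  · show f.eval a = 0
    apply hι_inj
    rw [map_zero ι, ← hevalc f a]
    exact hr0
  · rw [hmax]
    have hsub' : ι (a - a₀) = r - ι a₀ := by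
      rw [RingHom.map_sub]
      rfl
    rw [hsub']
    exact hrA

end Final

end Stmt17

open Stmt17 in
/-- Let (K,v) be a valued field of rank 1 (nontrivial archimedean
value group) and (K(x)|K,v) an immediate transcendental extension.  Then K[x] is
dense in the henselization K(x)^h: for every a ∈ K(x)^h and every value γ = v(c)
with c ∈ K, c ≠ 0, there is f(x) ∈ K[x] with v(a − f(x)) > γ. -/
theorem stmt17 {Ω Γ : Type*} [Field Ω] [IsAlgClosed Ω] [LinearOrderedCommGroupWithZero Γ]
    (w : Valuation Ω Γ) (K : Subfield Ω)
    (hnontriv : ∃ a ∈ K, a ≠ 0 ∧ w a ≠ 1)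
    (harch : ∀ a ∈ K, ∀ b ∈ K, w a < 1 → b ≠ 0 → ∃ n : ℕ, w a ^ n < w b)  -- rank 1
    (x : Ω) (htrans : TransOver K x)
    (himm : IsImmediateExt w K (Subfield.closure ((K : Set Ω) ∪ {x}))) :
    ∀ a ∈ henselization w (Subfield.closure ((K : Set Ω) ∪ {x})),
      ∀ c ∈ K, c ≠ 0 → ∃ f : Polynomial Ω,
        (∀ i, f.coeff i ∈ K) ∧ w (a - Polynomial.eval x f) < w c := by
  intro a ha c hc hc0
  obtain ⟨himm1, himm2⟩ := himm
  set M := Subfield.closure ((K : Set Ω) ∪ {x}) with hM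
  have hKM : ∀ y ∈ K, y ∈ M := fun y hy => Subfield.subset_closure (Or.inl hy)
  have hxM : x ∈ M := Subfield.subset_closure (Or.inr rfl)
  obtain ⟨s, hsK, hs0, hs1⟩ := hnontriv
  obtain ⟨t, htK, ht0, ht1⟩ : ∃ t, t ∈ K ∧ t ≠ 0 ∧ w t < 1 := by
    rcases lt_or_gt_of_ne hs1 with h | h
    · exact ⟨s, hsK, hs0, h⟩
    · refine ⟨s⁻¹, K.inv_mem hsK, inv_ne_zero hs0, ?_⟩
      have hws : w s ≠ 0 := w.ne_zero_iff.mpr hs0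
      rw [map_inv₀]
      calc (w s)⁻¹ = 1 * (w s)⁻¹ := (one_mul _).symm
      _ < w s * (w s)⁻¹ := mul_lt_mul_right'₀ h (inv_ne_zero hws)
      _ = 1 := mul_inv_cancel₀ hws
  set D := Dsub w K x M hKM hxM himm1 himm2 harch with hD
  have hMD : M ≤ D := by
    rw [hM]
    refine Subfield.closure_le.mpr ?_
    rintro y (hy | hy)
    · exact mem_Dsub.mpr ⟨approx_of_mem hy, IntOver.of_mem (hKM y hy)⟩
    · rw [Set.mem_singleton_iff] at hy
      subst hy
      exact mem_Dsub.mpr ⟨approx_x, IntOver.of_mem hxM⟩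
  have hhens : Subfield.IsHenselian w D :=
    Dsub_isHenselian hKM hxM himm1 himm2 harch hMD htK ht0 ht1
  have hle : henselization w M ≤ D := sInf_le ⟨hMD, hhens⟩
  exact (mem_Dsub.mp (hle ha)).1 c hc hc0
end

section
/- Let (F|K,v) be a valued function field such that vF/vK is a torsion group and Fv|Kv is algebraic, with v extended to the algebraic closure of F. Then the extension (F.К̃ | K̃, v) of F composited with the algebraic closure K̃ of K is an immediate valued function field: v(F.K̃) = vK̃ and (F.K̃)v = K̃v. -/
/-- x is algebraic over the subfield M. -/
def AlgOver {Ω : Type*} [Field Ω] (M : Subfield Ω) (x : Ω) : Prop :=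
  ∃ f : Polynomial Ω, f ≠ 0 ∧ (∀ i, f.coeff i ∈ M) ∧ Polynomial.eval x f = 0

open Polynomial Finset

set_option linter.unusedSectionVars false
set_option linter.unusedVariables false

section stmtaux
variable {Ω Γ : Type*} [Field Ω] [IsAlgClosed Ω] [LinearOrderedCommGroupWithZero Γ]
  (w : Valuation Ω Γ)

lemma my_pow_inj {a b : Γ} {n : ℕ} (hn : n ≠ 0) (h : a ^ n = b ^ n) : a = b :=
  (pow_left_inj₀ zero_le' zero_le' hn).mp h

lemma exists_two_max {ι : Type*} {s : Finset ι} (t : ι → Ω) (h0 : ∑ i ∈ s, t i = 0)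
    {i₀ : ι} (hi₀ : i₀ ∈ s) (hti₀ : t i₀ ≠ 0) :
    ∃ i ∈ s, ∃ j ∈ s, i ≠ j ∧ w (t i) ≠ 0 ∧ w (t i) = w (t j) := by
  classical
  obtain ⟨i, his, hmax⟩ := s.exists_max_image (fun i => w (t i)) ⟨i₀, hi₀⟩
  have hne : w (t i) ≠ 0 := fun h => hti₀ (by
    have := hmax i₀ hi₀
    rw [h, le_zero_iff] at this
    exact (Valuation.zero_iff w).mp this)
  by_contra hcon
  push_neg at hcon
  have hlt : ∀ j ∈ s.erase i, w (t j) < w (t i) := by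
    intro j hj
    rcases Finset.mem_erase.mp hj with ⟨hji, hjs⟩
    exact lt_of_le_of_ne (hmax j hjs) (fun h => hcon i his j hjs (Ne.symm hji) hne h.symm)
  have hsum := Valuation.map_sum_lt w hne hlt
  have h2 := Valuation.map_add_eq_of_lt_left w hsum
  rw [Finset.add_sum_erase s t his, h0] at h2
  exact hne (by simpa using h2.symm)

lemma part1 (K F : Subfield Ω)
    (htors : ∀ x ∈ F, x ≠ 0 → ∃ n : ℕ, 0 < n ∧ ∃ y ∈ K, y ≠ 0 ∧ w x ^ n = w y)
    (x : Ω) (hx : x ≠ 0) (halg : AlgOver F x) :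
    ∃ y, AlgOver K y ∧ w y = w x := by
  obtain ⟨f, hf0, hfF, hfx⟩ := halg
  set n := f.natDegree with hn
  have hsum : ∑ i ∈ range (n + 1), f.coeff i * x ^ i = 0 := by
    rw [← Polynomial.eval_eq_sum_range]; exact hfx
  have hlead : f.coeff n ≠ 0 := by
    rw [hn, ← Polynomial.leadingCoeff]; exact Polynomial.leadingCoeff_ne_zero.mpr hf0
  have htn : f.coeff n * x ^ n ≠ 0 := mul_ne_zero hlead (pow_ne_zero _ hx)
  obtain ⟨i, his, j, hjs, hij, hwi, hweq⟩ :=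
    exists_two_max w _ hsum (Finset.self_mem_range_succ n) htn
  have hwx : w x ≠ 0 := (Valuation.ne_zero_iff w).mpr hx
  have hco : ∀ p : ℕ, w (f.coeff p * x ^ p) ≠ 0 → f.coeff p ≠ 0 := by
    intro p hp hc; rw [hc, zero_mul] at hp; simp at hp
  obtain ⟨a, b, hab, hca, hcb, hW⟩ : ∃ a b : ℕ, a < b ∧ f.coeff a ≠ 0 ∧ f.coeff b ≠ 0 ∧
      w (f.coeff a) * w x ^ a = w (f.coeff b) * w x ^ b := by
    have hwj : w (f.coeff j * x ^ j) ≠ 0 := hweq ▸ hwi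
    rcases lt_or_gt_of_ne hij with h | h
    · exact ⟨i, j, h, hco i hwi, hco j hwj, by simpa only [map_mul, map_pow] using hweq⟩
    · exact ⟨j, i, h, hco j hwj, hco i hwi, by simpa only [map_mul, map_pow] using hweq.symm⟩
  have hwb : w (f.coeff b) ≠ 0 := (Valuation.ne_zero_iff w).mpr hcb
  have hkey : w x ^ (b - a) = w (f.coeff a / f.coeff b) := by
    rw [map_div₀, eq_div_iff hwb]
    apply mul_right_cancel₀ (pow_ne_zero a hwx)
    calc w x ^ (b - a) * w (f.coeff b) * w x ^ a
        = w (f.coeff b) * (w x ^ (b - a) * w x ^ a) := by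
          rw [mul_comm (w x ^ (b-a)) (w (f.coeff b)), mul_assoc]
      _ = w (f.coeff b) * w x ^ b := by rw [← pow_add]; congr 2; omega
      _ = w (f.coeff a) * w x ^ a := hW.symm
  have hzF : f.coeff a / f.coeff b ∈ F := div_mem (hfF a) (hfF b)
  have hz0 : f.coeff a / f.coeff b ≠ 0 := div_ne_zero hca hcb
  obtain ⟨n', hn', y, hyK, hy0, hzy⟩ := htors _ hzF hz0
  have hm : 0 < (b - a) * n' := Nat.mul_pos (by omega) hn'
  have hxy : w x ^ ((b - a) * n') = w y := by rw [pow_mul, hkey]; exact hzy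
  obtain ⟨u, hu⟩ := IsAlgClosed.exists_pow_nat_eq y hm
  have hu0 : u ≠ 0 := by
    rintro rfl; exact hy0 (by rw [← hu, zero_pow (by omega : (b - a) * n' ≠ 0)])
  refine ⟨u, ⟨Polynomial.X ^ ((b - a) * n') - Polynomial.C y, ?_, ?_, ?_⟩, ?_⟩
  · exact Polynomial.X_pow_sub_C_ne_zero hm y
  · intro i
    rw [Polynomial.coeff_sub]
    refine sub_mem ?_ ?_
    · rw [Polynomial.coeff_X_pow]; split_ifs; exacts [one_mem K, zero_mem K]
    · rw [Polynomial.coeff_C]; split_ifs; exacts [hyK, zero_mem K]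
  · simp [hu]
  · refine my_pow_inj (n := (b - a) * n') (by omega) ?_
    rw [← map_pow, hu]; exact hxy.symm

/-- The residue field of the valuation ring of `w`. -/
abbrev ResF := IsLocalRing.ResidueField ↥w.valuationSubring

/-- The residue map. -/
noncomputable abbrev resf : ↥w.valuationSubring →+* ResF w :=
  IsLocalRing.residue ↥w.valuationSubring

lemma val_isUnit_iff (z : ↥w.valuationSubring) : IsUnit z ↔ w ↑z = 1 := by
  constructor
  · intro h
    obtain ⟨t, ht⟩ := isUnit_iff_exists_inv.mp h
    have h2 : (z : Ω) * (t : Ω) = 1 := by exact_mod_cast congrArg Subtype.val ht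
    have hmul : w ↑z * w ↑t = 1 := by rw [← map_mul, h2, map_one]
    refine le_antisymm z.2 ?_
    calc (1 : Γ) = w ↑z * w ↑t := hmul.symm
      _ ≤ w ↑z * 1 := mul_le_mul_right t.2 _
      _ = w ↑z := mul_one _
  · intro h1
    have hz0 : (z : Ω) ≠ 0 := fun h => by simp [h] at h1
    have hinv : w (z : Ω)⁻¹ ≤ 1 := by rw [map_inv₀, h1]; norm_num
    refine isUnit_iff_exists_inv.mpr ⟨⟨(z : Ω)⁻¹, hinv⟩, ?_⟩
    ext
    exact mul_inv_cancel₀ hz0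

lemma resf_eq_zero_iff (z : ↥w.valuationSubring) : resf w z = 0 ↔ w ↑z < 1 := by
  rw [show resf w z = 0 ↔ z ∈ IsLocalRing.maximalIdeal _ from Ideal.Quotient.eq_zero_iff_mem,
    IsLocalRing.mem_maximalIdeal, mem_nonunits_iff, val_isUnit_iff]
  exact ⟨fun h => lt_of_le_of_ne z.2 h, fun h => ne_of_lt h⟩

/-- The residue subfield of a subfield `M` of `Ω`. -/
noncomputable def resOf (M : Subfield Ω) : Subfield (ResF w) where
  carrier := {t | ∃ a : ↥w.valuationSubring, (a : Ω) ∈ M ∧ resf w a = t}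
  one_mem' := ⟨1, one_mem M, map_one _⟩
  zero_mem' := ⟨0, zero_mem M, map_zero _⟩
  add_mem' := by
    rintro t₁ t₂ ⟨a, haM, rfl⟩ ⟨b, hbM, rfl⟩
    exact ⟨a + b, add_mem haM hbM, map_add _ _ _⟩
  mul_mem' := by
    rintro t₁ t₂ ⟨a, haM, rfl⟩ ⟨b, hbM, rfl⟩
    exact ⟨a * b, mul_mem haM hbM, map_mul _ _ _⟩
  neg_mem' := by
    rintro t ⟨a, haM, rfl⟩
    exact ⟨-a, neg_mem haM, map_neg _ _⟩
  inv_mem' := by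
    rintro t ⟨a, haM, rfl⟩
    by_cases h0 : resf w a = 0
    · rw [h0, inv_zero]; exact ⟨0, zero_mem M, map_zero _⟩
    · have h1 : w ↑a = 1 := by
        rcases lt_or_eq_of_le a.2 with h | h
        · exact absurd ((resf_eq_zero_iff w a).mpr h) h0
        · exact h
      have ha0 : (a : Ω) ≠ 0 := fun h => by simp [h] at h1
      have hinv : w (a : Ω)⁻¹ ≤ 1 := by rw [map_inv₀, h1]; norm_num
      refine ⟨⟨(a : Ω)⁻¹, hinv⟩, inv_mem haM, ?_⟩
      have : a * ⟨(a : Ω)⁻¹, hinv⟩ = 1 := by ext; exact mul_inv_cancel₀ ha0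
      have hm : resf w a * resf w ⟨(a : Ω)⁻¹, hinv⟩ = 1 := by rw [← map_mul, this, map_one]
      exact (eq_inv_of_mul_eq_one_left (by rw [mul_comm] at hm; exact hm)).symm ▸ rfl

lemma resOf_le {M N : Subfield Ω} (h : M ≤ N) : resOf w M ≤ resOf w N := by
  rintro t ⟨a, haM, rfl⟩; exact ⟨a, h haM, rfl⟩

universe u in
lemma mkpoly {R : Type u} [CommRing R] [Nontrivial R] (c : ℕ → R) (d : ℕ) (hc : c d = 1) :
    ∃ q : Polynomial R, q.Monic ∧ q.natDegree = d ∧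
      (∀ i, q.coeff i = if i ≤ d then c i else 0) ∧
      (∀ {S : Type u} [CommRing S] (g : R →+* S) (u : S),
        Polynomial.eval₂ g u q = ∑ i ∈ Finset.range (d + 1), g (c i) * u ^ i) := by
  classical
  set q : Polynomial R := ∑ i ∈ Finset.range (d + 1), Polynomial.C (c i) * Polynomial.X ^ i with hq
  have hcoeff : ∀ i, q.coeff i = if i ≤ d then c i else 0 := by
    intro n
    rw [hq, Polynomial.finset_sum_coeff]
    simp only [Polynomial.coeff_C_mul, Polynomial.coeff_X_pow]
    simp only [mul_ite, mul_one, mul_zero]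
    rw [Finset.sum_ite_eq]
    simp [Finset.mem_range, Nat.lt_succ_iff]
  have hdeg : q.natDegree = d := by
    apply le_antisymm
    · apply Polynomial.natDegree_le_iff_coeff_eq_zero.mpr
      intro i hi
      rw [hcoeff i, if_neg (by omega)]
    · apply Polynomial.le_natDegree_of_ne_zero
      rw [hcoeff d, if_pos le_rfl, hc]
      exact one_ne_zero
  refine ⟨q, ?_, hdeg, hcoeff, ?_⟩
  · unfold Polynomial.Monic Polynomial.leadingCoeff
    rw [hdeg, hcoeff d, if_pos le_rfl, hc]
  · intro S _ g u
    rw [hq, Polynomial.eval₂_finset_sum]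
    refine Finset.sum_congr rfl fun i _ => ?_
    rw [Polynomial.eval₂_mul, Polynomial.eval₂_C, Polynomial.eval₂_X_pow]

lemma resIntegral (M : Subfield Ω) (u : Ω) (hu : w u ≤ 1) (P : Polynomial Ω) (hP : P.Monic)
    (hPc : ∀ i, P.coeff i ∈ M ∧ w (P.coeff i) ≤ 1) (hPu : w (P.eval u) < 1) :
    IsIntegral ↥(resOf w M) (resf w ⟨u, hu⟩) := by
  set d := P.natDegree with hd
  set c : ℕ → ↥(resOf w M) := fun i =>
    ⟨resf w ⟨P.coeff i, (hPc i).2⟩, ⟨⟨P.coeff i, (hPc i).2⟩, (hPc i).1, rfl⟩⟩ with hcdef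
  have hcd : c d = 1 := by
    apply Subtype.ext
    show resf w ⟨P.coeff d, (hPc d).2⟩ = 1
    have : (⟨P.coeff d, (hPc d).2⟩ : ↥w.valuationSubring) = 1 :=
      Subtype.ext hP.coeff_natDegree
    rw [this, map_one]
  obtain ⟨q, hqm, hqdeg, hqc, hqev⟩ := mkpoly c d hcd
  refine ⟨q, hqm, ?_⟩
  rw [hqev (algebraMap ↥(resOf w M) (ResF w)) (resf w ⟨u, hu⟩)]
  have hsum : (∑ i ∈ Finset.range (d + 1),
      (⟨P.coeff i, (hPc i).2⟩ : ↥w.valuationSubring) * (⟨u, hu⟩ : ↥w.valuationSubring) ^ i)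
      = ⟨P.eval u, le_of_lt hPu⟩ := by
    ext
    push_cast
    rw [Polynomial.eval_eq_sum_range]
  calc ∑ i ∈ Finset.range (d + 1),
        algebraMap ↥(resOf w M) (ResF w) (c i) * resf w ⟨u, hu⟩ ^ i
      = resf w (∑ i ∈ Finset.range (d + 1),
          (⟨P.coeff i, (hPc i).2⟩ : ↥w.valuationSubring) * (⟨u, hu⟩ : ↥w.valuationSubring) ^ i) := by
        rw [map_sum]
        exact Finset.sum_congr rfl fun i _ => by rw [map_mul, map_pow]; rfl
    _ = 0 := by rw [hsum]; exact (resf_eq_zero_iff w _).mpr hPu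

lemma rootExtract [IsAlgClosed Ω] (K : Subfield Ω) (x : Ω) (hx : w x ≤ 1)
    (h : IsIntegral ↥(resOf w K) (resf w ⟨x, hx⟩)) :
    ∃ y, AlgOver K y ∧ w (x - y) < 1 := by
  classical
  obtain ⟨q, hqm, hq0⟩ := h
  set d := q.natDegree with hd
  have hcoK : ∀ i, ∃ a : ↥w.valuationSubring, (a : Ω) ∈ K ∧ resf w a = ↑(q.coeff i) :=
    fun i => (q.coeff i).2
  choose b hbK hbres using hcoK
  set c : ℕ → Ω := fun i => if i = d then 1 else if d < i then 0 else ↑(b i) with hcdef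
  have hcd : c d = 1 := by simp [hcdef]
  have hcK : ∀ i, c i ∈ K := by
    intro i; rw [hcdef]; dsimp only
    split_ifs
    exacts [one_mem K, zero_mem K, hbK i]
  have hcO : ∀ i, w (c i) ≤ 1 := by
    intro i; rw [hcdef]; dsimp only
    split_ifs
    · rw [map_one]
    · rw [map_zero]; exact zero_le'
    · exact (b i).2
  have hcres : ∀ i, resf w ⟨c i, hcO i⟩ = ↑(q.coeff i) := by
    intro i
    rcases eq_or_ne i d with heq | hne
    · have h1 : (⟨c i, hcO i⟩ : ↥w.valuationSubring) = 1 := Subtype.ext (by rw [heq]; exact hcd)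
      rw [h1, map_one, heq]
      show (1 : ResF w) = ↑(q.coeff q.natDegree)
      rw [hqm.coeff_natDegree]
      simp
    · rcases lt_or_gt_of_ne hne with hlt | hgt
      · have h1 : (⟨c i, hcO i⟩ : ↥w.valuationSubring) = b i := by
          apply Subtype.ext
          show c i = ↑(b i)
          rw [hcdef]; dsimp only
          rw [if_neg hne, if_neg (not_lt.mpr hlt.le)]
        rw [h1, hbres i]
      · have h1 : (⟨c i, hcO i⟩ : ↥w.valuationSubring) = 0 := by
          apply Subtype.ext
          show c i = 0
          rw [hcdef]; dsimp only
          rw [if_neg hne, if_pos hgt]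
        have h2 : q.coeff i = 0 := Polynomial.coeff_eq_zero_of_natDegree_lt hgt
        rw [h1, map_zero, h2]; rfl
  obtain ⟨Q, hQm, hQdeg, hQc, hQev⟩ := mkpoly c d hcd
  -- the element ∑ c i x^i of the valuation ring
  set E : ↥w.valuationSubring :=
    ∑ i ∈ Finset.range (d + 1), (⟨c i, hcO i⟩ : ↥w.valuationSubring) * (⟨x, hx⟩ : ↥w.valuationSubring) ^ i with hE
  have hEeval : (E : Ω) = Q.eval x := by
    show ((∑ i ∈ Finset.range (d + 1), (⟨c i, hcO i⟩ : ↥w.valuationSubring) * (⟨x, hx⟩ : ↥w.valuationSubring) ^ i : ↥w.valuationSubring) : Ω) = _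
    push_cast
    rw [Polynomial.eval_eq_sum_range' (n := d + 1) (by rw [hQdeg]; omega)]
    exact Finset.sum_congr rfl fun i hi => by
      rw [hQc i, if_pos (Nat.lt_succ_iff.mp (Finset.mem_range.mp hi))]
  have hres0 : resf w E = 0 := by
    rw [hE, map_sum]
    have : ∀ i ∈ Finset.range (d + 1),
        resf w ((⟨c i, hcO i⟩ : ↥w.valuationSubring) * (⟨x, hx⟩ : ↥w.valuationSubring) ^ i)
        = algebraMap ↥(resOf w K) (ResF w) (q.coeff i) * resf w ⟨x, hx⟩ ^ i := by
      intro i _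
      rw [map_mul, map_pow, hcres i]; rfl
    rw [Finset.sum_congr rfl this]
    rw [← Polynomial.eval₂_eq_sum_range (algebraMap ↥(resOf w K) (ResF w)) (resf w ⟨x, hx⟩)]
    exact hq0
  have hwQ : w (Q.eval x) < 1 := by
    rw [← hEeval]
    exact (resf_eq_zero_iff w E).mp hres0
  -- split into roots
  have hsp := (IsAlgClosed.splits Q).eq_prod_roots_of_monic hQm
  have h1 : Q.eval x = ((Q.roots.map fun a => x - a)).prod := by
    conv_lhs => rw [hsp]
    rw [Polynomial.eval_multiset_prod, Multiset.map_map]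
    refine congrArg _ (Multiset.map_congr rfl fun a _ => ?_)
    simp
  have hprod : w (Q.eval x) = ((Q.roots.map fun a => w (x - a))).prod := by
    rw [h1, map_multiset_prod, Multiset.map_map]
    simp [Function.comp]
  have hex : ∃ a ∈ Q.roots, w (x - a) < 1 := by
    by_contra hcon
    push_neg at hcon
    have : (1 : Γ) ≤ ((Q.roots.map fun a => w (x - a))).prod := by
      apply Multiset.one_le_prod_of_one_le
      intro g hg
      obtain ⟨a, ha, rfl⟩ := Multiset.mem_map.mp hg
      exact hcon a ha
    rw [hprod] at hwQ
    exact absurd hwQ (not_lt.mpr this)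
  obtain ⟨a, haroot, halt⟩ := hex
  refine ⟨a, ⟨Q, hQm.ne_zero, ?_, Polynomial.isRoot_of_mem_roots haroot⟩, halt⟩
  intro i
  rw [hQc i]
  split_ifs
  exacts [hcK i, zero_mem K]

lemma step1 (F : Subfield Ω) (x : Ω) (hx1 : w x = 1) (halg : AlgOver F x) :
    ∃ p : Polynomial Ω, p.Monic ∧ 0 < p.natDegree ∧
      (∀ i, p.coeff i ∈ F ∧ w (p.coeff i) ≤ 1) ∧ w (p.eval x) < 1 := by
  classical
  obtain ⟨f, hf0, hfF, hfx⟩ := halg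
  set n := f.natDegree with hn
  set s := Finset.range (n + 1) with hs
  have hsum0 : ∑ i ∈ s, f.coeff i * x ^ i = 0 := by
    rw [hs, ← Polynomial.eval_eq_sum_range]; exact hfx
  set S := s.filter (fun i => ∀ i' ∈ s, w (f.coeff i') ≤ w (f.coeff i)) with hS
  have hSne : S.Nonempty := by
    obtain ⟨i, his, hmax⟩ := s.exists_max_image (fun i => w (f.coeff i)) ⟨0, by simp [hs]⟩
    exact ⟨i, Finset.mem_filter.mpr ⟨his, hmax⟩⟩
  set j := S.max' hSne with hj
  have hjS := S.max'_mem hSne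
  have hjs : j ∈ s := (Finset.mem_filter.mp hjS).1
  have hjmax : ∀ i ∈ s, w (f.coeff i) ≤ w (f.coeff j) := (Finset.mem_filter.mp hjS).2
  set M := w (f.coeff j) with hM
  have hM0 : M ≠ 0 := by
    have hlead : f.coeff n ≠ 0 := by
      rw [hn, ← Polynomial.leadingCoeff]; exact Polynomial.leadingCoeff_ne_zero.mpr hf0
    have h1 : w (f.coeff n) ≤ M := hjmax n (Finset.self_mem_range_succ n)
    intro h; rw [h, le_zero_iff] at h1
    exact hlead ((Valuation.zero_iff w).mp h1)
  have hMpos : (0 : Γ) < M := lt_of_le_of_ne zero_le' (Ne.symm hM0)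
  have hcj : f.coeff j ≠ 0 := fun h => hM0 (by rw [hM, h, map_zero])
  have hgtlt : ∀ i, j < i → w (f.coeff i) < M := by
    intro i hji
    by_cases his : i ∈ s
    · rcases lt_or_eq_of_le (hjmax i his) with h | h
      · exact h
      · exfalso
        have hiS : i ∈ S := Finset.mem_filter.mpr
          ⟨his, fun i' hi' => (hjmax i' hi').trans_eq h.symm⟩
        exact absurd (S.le_max' i hiS) (not_le.mpr hji)
    · rw [Polynomial.coeff_eq_zero_of_natDegree_lt
        (by rw [hs, Finset.mem_range] at his; omega), map_zero]
      exact hMpos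
  have hj1 : j ≠ 0 := by
    intro hj0
    have hterm : ∀ i ∈ s.erase 0, w (f.coeff i * x ^ i) < M := by
      intro i hi
      rcases Finset.mem_erase.mp hi with ⟨hi0, his⟩
      rw [map_mul, map_pow, hx1, one_pow, mul_one]
      exact hgtlt i (by omega)
    have h2 := Valuation.map_sum_lt w hM0 hterm
    have h0s : (0 : ℕ) ∈ s := by simp [hs]
    have h3 : w (f.coeff 0 * x ^ 0) = M := by
      rw [map_mul, map_pow, hx1, one_pow, mul_one, hM, hj0]
    rw [← Finset.add_sum_erase s (fun i => f.coeff i * x ^ i) h0s] at hsum0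
    have h4 := Valuation.map_add_eq_of_lt_left w (h3.symm ▸ h2)
    rw [hsum0, map_zero, h3] at h4
    exact hM0 h4.symm
  -- build the monic polynomial
  set c : ℕ → Ω := fun i => if i = j then 1 else f.coeff i / f.coeff j with hcdef
  have hcd : c j = 1 := by simp [hcdef]
  obtain ⟨p, hpm, hpdeg, hpc, _⟩ := mkpoly c j hcd
  have hcF : ∀ i, c i ∈ F := by
    intro i; rw [hcdef]; dsimp only
    split_ifs
    exacts [one_mem F, div_mem (hfF i) (hfF j)]
  have hcO : ∀ i, w (c i) ≤ 1 := by
    intro i; rw [hcdef]; dsimp only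
    split_ifs with h
    · rw [map_one]
    · rw [map_div₀]
      rcases lt_or_gt_of_ne (fun hh : i = j => h hh) with hlt | hgt
      · exact (div_le_one₀ hMpos).mpr (hjmax i (by
          rw [hs, Finset.mem_range]
          rw [hs, Finset.mem_range] at hjs
          omega))
      · exact (div_le_one₀ hMpos).mpr (le_of_lt (hgtlt i hgt))
  refine ⟨p, hpm, by omega, fun i => ⟨by rw [hpc i]; split_ifs; exacts [hcF i, zero_mem F],
    by rw [hpc i]; split_ifs; exacts [hcO i, by rw [map_zero]; exact zero_le']⟩, ?_⟩
  -- evaluate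
  have hev : p.eval x = ∑ i ∈ Finset.range (j + 1), c i * x ^ i := by
    rw [Polynomial.eval_eq_sum_range' (n := j + 1) (by omega)]
    exact Finset.sum_congr rfl fun i hi => by
      rw [hpc i, if_pos (Nat.lt_succ_iff.mp (Finset.mem_range.mp hi))]
  have hfact : p.eval x = (f.coeff j)⁻¹ * ∑ i ∈ Finset.range (j + 1), f.coeff i * x ^ i := by
    rw [hev, Finset.mul_sum]
    refine Finset.sum_congr rfl fun i _ => ?_
    rw [hcdef]; dsimp only
    split_ifs with h
    · rw [h, one_mul, ← mul_assoc, inv_mul_cancel₀ hcj, one_mul]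
    · rw [div_eq_mul_inv, mul_comm (f.coeff i) (f.coeff j)⁻¹, mul_assoc]
  have hsplit : ∑ i ∈ Finset.range (j + 1), f.coeff i * x ^ i
      = -∑ i ∈ Finset.Ico (j + 1) (n + 1), f.coeff i * x ^ i := by
    apply eq_neg_of_add_eq_zero_left
    have hjn : j + 1 ≤ n + 1 := by rw [hs, Finset.mem_range] at hjs; omega
    calc ∑ i ∈ Finset.range (j + 1), f.coeff i * x ^ i
          + ∑ i ∈ Finset.Ico (j + 1) (n + 1), f.coeff i * x ^ i
        = ∑ i ∈ Finset.range (n + 1), f.coeff i * x ^ i := by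
          rw [Finset.range_eq_Ico, Finset.range_eq_Ico]
          exact Finset.sum_Ico_consecutive (fun i => f.coeff i * x ^ i) (Nat.zero_le _) hjn
      _ = 0 := hsum0
  have hwtail : w (∑ i ∈ Finset.Ico (j + 1) (n + 1), f.coeff i * x ^ i) < M := by
    apply Valuation.map_sum_lt w hM0
    intro i hi
    rw [map_mul, map_pow, hx1, one_pow, mul_one]
    exact hgtlt i (by rcases Finset.mem_Ico.mp hi with ⟨h1, _⟩; omega)
  rw [hfact, hsplit, map_mul, w.map_neg, map_inv₀]
  rw [mul_comm, ← div_eq_mul_inv, ← hM]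
  rw [div_lt_iff₀ hMpos, one_mul]
  exact hwtail

lemma resOf_isIntegral (K F : Subfield Ω) (hKF : K ≤ F)
    (hresalg : ∀ x ∈ F, w x = 1 → ∃ f : Polynomial Ω, f.Monic ∧ 0 < f.natDegree ∧
      (∀ i, f.coeff i ∈ K ∧ w (f.coeff i) ≤ 1) ∧ w (Polynomial.eval x f) < 1)
    (z : ResF w) (hz : z ∈ resOf w F) : IsIntegral ↥(resOf w K) z := by
  obtain ⟨a, haF, rfl⟩ := hz
  rcases lt_or_eq_of_le a.2 with hlt | h1
  · rw [(resf_eq_zero_iff w a).mpr hlt]; exact isIntegral_zero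
  · obtain ⟨f, hfm, hfd, hfc, hfe⟩ := hresalg ↑a haF h1
    have h2 := resIntegral w K ↑a a.2 f hfm hfc hfe
    convert h2 using 2

set_option synthInstance.maxHeartbeats 1000000 in
set_option maxHeartbeats 1000000 in
lemma part2 [IsAlgClosed Ω] (K F : Subfield Ω) (hKF : K ≤ F)
    (hresalg : ∀ x ∈ F, w x = 1 → ∃ f : Polynomial Ω, f.Monic ∧ 0 < f.natDegree ∧
      (∀ i, f.coeff i ∈ K ∧ w (f.coeff i) ≤ 1) ∧ w (Polynomial.eval x f) < 1)
    (x : Ω) (hx1 : w x = 1) (halg : AlgOver F x) :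
    ∃ y, AlgOver K y ∧ w (x - y) < 1 := by
  have hx : w x ≤ 1 := le_of_eq hx1
  obtain ⟨p, hpm, hpd, hpc, hpe⟩ := step1 w F x hx1 halg
  have hxF : IsIntegral ↥(resOf w F) (resf w ⟨x, hx⟩) := resIntegral w F x hx p hpm hpc hpe
  letI : Algebra ↥(resOf w K) ↥(resOf w F) := (Subfield.inclusion (resOf_le w hKF)).toAlgebra
  haveI : IsScalarTower ↥(resOf w K) ↥(resOf w F) (ResF w) :=
    IsScalarTower.of_algebraMap_eq (fun r => rfl)
  haveI : Algebra.IsIntegral ↥(resOf w K) ↥(resOf w F) := by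
    constructor
    intro z
    have h1 : IsIntegral ↥(resOf w K) ((z : ResF w)) :=
      resOf_isIntegral w K F hKF hresalg ↑z z.2
    exact (isIntegral_algHom_iff (IsScalarTower.toAlgHom ↥(resOf w K) ↥(resOf w F) (ResF w))
      (fun a b hab => Subtype.ext hab)).mp h1
  have hxK : IsIntegral ↥(resOf w K) (resf w ⟨x, hx⟩) := isIntegral_trans _ hxF
  exact rootExtract w K x hx hxK

end stmtaux

/-- Let (F|K,v) be a valued function field such that vF/vK is a torsion
group and Fv|Kv is algebraic, with v extended to the algebraic closure Ω of F.
Then (F.K̃ | K̃, v) is an immediate extension, where K̃ is the algebraic closure of K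
inside Ω: v(F.K̃) = vK̃ and (F.K̃)v = K̃v.
  (vF/vK torsion: every value of F has a positive power which is a value of K;
  Fv|Kv algebraic: every residue of F is a root of a monic polynomial whose
  coefficients are residues of elements of K, expressed via a monic lift with
  coefficients in K ∩ O and positive degree.) -/
theorem stmt18 {Ω Γ : Type*} [Field Ω] [IsAlgClosed Ω] [LinearOrderedCommGroupWithZero Γ]
    (w : Valuation Ω Γ) (K F : Subfield Ω) (hKF : K ≤ F)
    (halgΩ : ∀ z : Ω, AlgOver F z)  -- Ω is the algebraic closure of F
    (hfg : ∃ s : Finset Ω, F = Subfield.closure ((K : Set Ω) ∪ ↑s))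
    (htors : ∀ x ∈ F, x ≠ 0 → ∃ n : ℕ, 0 < n ∧ ∃ y ∈ K, y ≠ 0 ∧ w x ^ n = w y)
    (hresalg : ∀ x ∈ F, w x = 1 → ∃ f : Polynomial Ω,
      f.Monic ∧ 0 < f.natDegree ∧ (∀ i, f.coeff i ∈ K ∧ w (f.coeff i) ≤ 1) ∧
      w (Polynomial.eval x f) < 1) :
    IsImmediateExt w (Subfield.closure {z : Ω | AlgOver K z})
      (F ⊔ Subfield.closure {z : Ω | AlgOver K z}) := by
  constructor
  · intro x _ hx0
    obtain ⟨y, hy, hwy⟩ := part1 w K F htors x hx0 (halgΩ x)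
    exact ⟨y, Subfield.subset_closure hy, hwy⟩
  · intro x _ hx1
    obtain ⟨y, hy, hlt⟩ := part2 w K F hKF hresalg x hx1 (halgΩ x)
    exact ⟨y, Subfield.subset_closure hy, hlt⟩
end

section
/- Let (F|K,v) be a valued function field of arbitrary transcendence degree and K'|K an algebraic extension (inside a fixed valued algebraic closure of F) such that (F.K'|K',v) is henselian rational, i.e., F.K' ⊆ K'(T)^h for some transcendence basis T ⊆ F.K' of F.K'|K'. Then there exists a finite subextension L|K of K'|K such that (F.L|L,v) is henselian rational. -/
/-- The set T is algebraically independent over the subfield M. -/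
def AlgIndepOver {Ω : Type*} [Field Ω] (M : Subfield Ω) (T : Set Ω) : Prop :=
  ∀ (n : ℕ) (t : Fin n → Ω) (f : MvPolynomial (Fin n) Ω),
    (∀ i, t i ∈ T) → Function.Injective t → (∀ m, MvPolynomial.coeff m f ∈ M) →
    MvPolynomial.eval t f = 0 → f = 0

/-- (M|B,w) is henselian rational: there is a transcendence basis T ⊆ M of M over B
(algebraically independent over B; it is automatically spanning) such that M lies in
the henselization of the rational function field B(T). -/
def HenselianRational {Ω Γ : Type*} [Field Ω] [LinearOrderedCommGroupWithZero Γ]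
    (w : Valuation Ω Γ) (B M : Subfield Ω) : Prop :=
  ∃ T : Set Ω, T ⊆ (M : Set Ω) ∧ AlgIndepOver B T ∧
    M ≤ henselization w (Subfield.closure ((B : Set Ω) ∪ T))

/-- An extension of subfields A ≤ B is finite if B is a finite A-module. -/
def Subfield.FiniteExt {Ω : Type*} [Field Ω] (A B : Subfield Ω) : Prop :=
  ∃ h : A ≤ B, (Subfield.inclusion h).Finite

namespace Stmt19Aux

open Polynomial

variable {Ω Γ : Type*} [Field Ω] [LinearOrderedCommGroupWithZero Γ]

/-! ### Units and maximal ideal of the valuation subring -/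

lemma isUnit_vs_iff {K : Type*} [Field K] (v : Valuation K Γ)
    (x : v.valuationSubring) : IsUnit x ↔ v (x : K) = 1 := by
  constructor
  · rintro ⟨u, rfl⟩
    have h1 : v ((u.val : K)) * v ((u.inv : K)) = 1 := by
      rw [← map_mul]
      norm_cast
      rw [u.val_inv]
      exact map_one v
    refine le_antisymm u.val.2 ?_
    calc (1 : Γ) = v (u.val : K) * v (u.inv : K) := h1.symm
      _ ≤ v (u.val : K) * 1 := mul_le_mul_right u.inv.2 _
      _ = v (u.val : K) := mul_one _
  · intro h
    have hx0 : (x : K) ≠ 0 := by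
      intro h0
      rw [h0, map_zero] at h
      exact zero_ne_one h
    have hinv : v ((x : K)⁻¹) = 1 := by
      have : v ((x : K)⁻¹) * v (x : K) = 1 := by
        rw [← map_mul, inv_mul_cancel₀ hx0, map_one]
      rw [h, mul_one] at this
      exact this
    refine IsUnit.of_mul_eq_one (a := x) ⟨(x : K)⁻¹, hinv.le⟩ ?_
    ext
    exact mul_inv_cancel₀ hx0

lemma mem_maxIdeal_vs_iff {K : Type*} [Field K] (v : Valuation K Γ)
    (x : v.valuationSubring) :
    x ∈ IsLocalRing.maximalIdeal v.valuationSubring ↔ v (x : K) < 1 := by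
  rw [IsLocalRing.mem_maximalIdeal, mem_nonunits_iff, isUnit_vs_iff]
  exact ⟨fun h => lt_of_le_of_ne x.2 h, fun h => ne_of_lt h⟩

/-! ### Lifting polynomials along ring homs -/

lemma exists_poly_map_eq {S : Type*} [CommRing S] (ψ : S →+* Ω) (f : Polynomial Ω)
    (h : ∀ i, ∃ s : S, ψ s = f.coeff i) : ∃ p : Polynomial S, p.map ψ = f := by
  choose c hc using h
  refine ⟨∑ i ∈ Finset.range (f.natDegree + 1), Polynomial.monomial i (c i), ?_⟩
  rw [Polynomial.map_sum]
  simp_rw [Polynomial.map_monomial, hc]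
  exact (f.as_sum_range' _ (Nat.lt_succ_self _)).symm

/-! ### The Ω-level Hensel property of a subfield -/

/-- Ω-level reformulation of henselianity of a subfield. -/
def HProp (w : Valuation Ω Γ) (M : Subfield Ω) : Prop :=
  ∀ f : Polynomial Ω, f.Monic → (∀ i, f.coeff i ∈ M) → (∀ i, w (f.coeff i) ≤ 1) →
    ∀ a₀, a₀ ∈ M → w a₀ ≤ 1 → w (f.eval a₀) < 1 → w (f.derivative.eval a₀) = 1 →
    ∃ a, a ∈ M ∧ w a ≤ 1 ∧ f.eval a = 0 ∧ w (a - a₀) < 1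

lemma isHenselian_iff (w : Valuation Ω Γ) (M : Subfield Ω) :
    Subfield.IsHenselian w M ↔ HProp w M := by
  classical
  let v : Valuation (↥M) Γ := w.comap M.subtype
  let O := v.valuationSubring
  let ψ : O →+* Ω := M.subtype.comp O.subtype
  have hinj : Function.Injective ψ := fun a b hab => Subtype.ext (Subtype.ext hab)
  have hψ : ∀ p : Polynomial O, ∀ x : O, (p.map ψ).eval (ψ x) = ψ (p.eval x) := by
    intro p x
    rw [Polynomial.eval_map, Polynomial.eval₂_at_apply]
  have hψd : ∀ p : Polynomial O, ∀ x : O,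
      (p.map ψ).derivative.eval (ψ x) = ψ (p.derivative.eval x) := by
    intro p x
    rw [Polynomial.derivative_map, hψ]
  constructor
  · intro hh f hmon hcM hcw a₀ haM haw hev hder
    obtain ⟨p, hp⟩ := exists_poly_map_eq ψ f
      (fun i => ⟨⟨⟨f.coeff i, hcM i⟩, hcw i⟩, rfl⟩)
    have hpm : p.Monic := Polynomial.monic_of_injective hinj (by rwa [hp])
    set A₀ : O := ⟨⟨a₀, haM⟩, haw⟩ with hA₀def
    have hψA₀ : ψ A₀ = a₀ := rfl
    have h1 : ψ (p.eval A₀) = f.eval a₀ := by rw [← hp, ← hψA₀, hψ]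
    have h2 : ψ (p.derivative.eval A₀) = f.derivative.eval a₀ := by
      rw [← hp, ← hψA₀, hψd]
    obtain ⟨A, hAroot, hAmem⟩ := hh.is_henselian p hpm A₀
      (by
        rw [mem_maxIdeal_vs_iff]
        show w (ψ (p.eval A₀)) < 1
        rw [h1]; exact hev)
      (by
        rw [isUnit_vs_iff]
        show w (ψ (p.derivative.eval A₀)) = 1
        rw [h2]; exact hder)
    refine ⟨ψ A, (A : ↥M).2, A.2, ?_, ?_⟩
    · rw [← hp, hψ, show p.eval A = 0 from hAroot, ψ.map_zero]
    · have : ψ A - a₀ = ψ (A - A₀) := by rw [ψ.map_sub, hψA₀]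
      rw [this]
      exact (mem_maxIdeal_vs_iff v _).mp hAmem
  · intro hp
    refine { is_henselian := ?_ }
    intro q hqm A₀ hA₀ hunit
    have hcM : ∀ i, (q.map ψ).coeff i ∈ M := by
      intro i
      rw [Polynomial.coeff_map]
      exact ((q.coeff i : ↥M)).2
    have hcw : ∀ i, w ((q.map ψ).coeff i) ≤ 1 := by
      intro i
      rw [Polynomial.coeff_map]
      exact (q.coeff i).2
    obtain ⟨a, haM, haw, hev, hlt⟩ := hp (q.map ψ) (hqm.map ψ) hcM hcw (ψ A₀)
      ((A₀ : ↥M)).2 A₀.2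
      (by
        rw [hψ]
        exact (mem_maxIdeal_vs_iff v _).mp hA₀)
      (by
        rw [hψd]
        exact (isUnit_vs_iff v _).mp hunit)
    set A : O := ⟨⟨a, haM⟩, haw⟩ with hAdef
    have hψA : ψ A = a := rfl
    refine ⟨A, ?_, ?_⟩
    · apply hinj
      rw [ψ.map_zero, ← hψ, hψA, hev]
    · rw [mem_maxIdeal_vs_iff]
      show w (ψ (A - A₀)) < 1
      rw [ψ.map_sub, hψA]
      exact hlt

/-! ### Uniqueness and existence of Hensel roots in Ω -/

lemma hensel_unique (w : Valuation Ω Γ) {f : Polynomial Ω} (hmon : f.Monic)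
    (hcoeff : ∀ i, w (f.coeff i) ≤ 1) {a₀ a b : Ω} (ha₀ : w a₀ ≤ 1)
    (hder : w (f.derivative.eval a₀) = 1)
    (hfa : f.eval a = 0) (hfb : f.eval b = 0)
    (haa : w (a - a₀) < 1) (hbb : w (b - a₀) < 1) : a = b := by
  by_contra hne
  let R := w.integer
  let ψ : R →+* Ω := R.subtype
  have hinj : Function.Injective ψ := Subtype.val_injective
  have hψ : ∀ p : Polynomial R, ∀ x : R, (p.map ψ).eval (ψ x) = ψ (p.eval x) := by
    intro p x
    rw [Polynomial.eval_map, Polynomial.eval₂_at_apply]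
  have haw : w a ≤ 1 := by
    have h : a = (a - a₀) + a₀ := by ring
    rw [h]; exact w.map_add_le haa.le ha₀
  have hbw : w b ≤ 1 := by
    have h : b = (b - a₀) + a₀ := by ring
    rw [h]; exact w.map_add_le hbb.le ha₀
  obtain ⟨p, hp⟩ := exists_poly_map_eq ψ f (fun i => ⟨⟨f.coeff i, hcoeff i⟩, rfl⟩)
  set aR : R := ⟨a, haw⟩ with haR
  set bR : R := ⟨b, hbw⟩ with hbR
  set a₀R : R := ⟨a₀, ha₀⟩ with ha₀R
  have hroot : p.IsRoot aR := by
    apply hinj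
    rw [ψ.map_zero, ← hψ]
    show (p.map ψ).eval a = 0
    rw [hp, hfa]
  set g := p /ₘ (Polynomial.X - Polynomial.C aR) with hgdef
  have hfact : (Polynomial.X - Polynomial.C aR) * g = p :=
    (Polynomial.mul_divByMonic_eq_iff_isRoot).mpr hroot
  have hderiv : p.derivative = g + (Polynomial.X - Polynomial.C aR) * g.derivative := by
    conv_lhs => rw [← hfact]
    rw [Polynomial.derivative_mul, Polynomial.derivative_sub, Polynomial.derivative_X,
      Polynomial.derivative_C, sub_zero, one_mul]
  have hevalsplit : f.derivative.eval a₀ =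
      ψ (g.eval a₀R) + (a₀ - a) * ψ (g.derivative.eval a₀R) := by
    have h1 : f.derivative.eval a₀ = ψ (p.derivative.eval a₀R) := by
      rw [← hp, Polynomial.derivative_map]
      exact hψ p.derivative a₀R
    rw [h1, hderiv]
    rw [Polynomial.eval_add, Polynomial.eval_mul, Polynomial.eval_sub, Polynomial.eval_X,
      Polynomial.eval_C, ψ.map_add, ψ.map_mul, ψ.map_sub]
    rfl
  set u := ψ (g.eval a₀R) with hu
  set s := (a₀ - a) * ψ (g.derivative.eval a₀R) with hs
  have hssmall : w s < 1 := by
    rw [hs, map_mul]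
    have h1 : w (ψ (g.derivative.eval a₀R)) ≤ 1 := (g.derivative.eval a₀R).2
    have h2 : w (a₀ - a) < 1 := by rw [w.map_sub_swap]; exact haa
    calc w (a₀ - a) * w (ψ (g.derivative.eval a₀R)) ≤ w (a₀ - a) * 1 :=
          mul_le_mul_right h1 _
      _ = w (a₀ - a) := mul_one _
      _ < 1 := h2
  have hga₀ : w u = 1 := by
    have hsum : w (u + s) = 1 := by rw [← hevalsplit]; exact hder
    have h : u = -s + (u + s) := by ring
    rw [h, Valuation.map_add_eq_of_lt_right]
    · exact hsum
    · rw [w.map_neg, hsum]; exact hssmall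
  have hb0 : (b - a) * ψ (g.eval bR) = 0 := by
    have h1 : ψ (p.eval bR) = 0 := by
      rw [← hψ]
      show (p.map ψ).eval b = 0
      rw [hp, hfb]
    have h2 : p.eval bR = (bR - aR) * g.eval bR := by
      conv_lhs => rw [← hfact]
      rw [Polynomial.eval_mul, Polynomial.eval_sub, Polynomial.eval_X, Polynomial.eval_C]
    calc (b - a) * ψ (g.eval bR) = ψ ((bR - aR) * g.eval bR) := by
          rw [ψ.map_mul, ψ.map_sub]; rfl
      _ = ψ (p.eval bR) := by rw [h2]
      _ = 0 := h1
  have hbne : b - a ≠ 0 := sub_ne_zero.mpr (fun h => hne h.symm)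
  have hgb0 : ψ (g.eval bR) = 0 := by
    rcases mul_eq_zero.mp hb0 with h | h
    · exact absurd h hbne
    · exact h
  obtain ⟨c, hc⟩ := Polynomial.sub_dvd_eval_sub bR a₀R g
  have hdiff : w (ψ (g.eval bR) - u) < 1 := by
    rw [hu, ← ψ.map_sub, hc, ψ.map_mul]
    have h1 : ψ (bR - a₀R) = b - a₀ := by rw [ψ.map_sub]; rfl
    rw [h1, map_mul]
    calc w (b - a₀) * w (ψ c) ≤ w (b - a₀) * 1 := mul_le_mul_right c.2 _
      _ = w (b - a₀) := mul_one _
      _ < 1 := hbb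
  have hfin : w (ψ (g.eval bR)) = 1 := by
    have h : ψ (g.eval bR) = (ψ (g.eval bR) - u) + u := by ring
    rw [h, Valuation.map_add_eq_of_lt_right]
    · exact hga₀
    · rw [hga₀]; exact hdiff
  rw [hgb0, map_zero] at hfin
  exact zero_ne_one hfin

lemma exists_lt_one_of_prod_lt_one {m : Multiset Γ} (h1 : ∀ x ∈ m, x ≤ 1)
    (h : m.prod < 1) : ∃ x ∈ m, x < 1 := by
  induction m using Multiset.induction with
  | empty => rw [Multiset.prod_zero] at h; exact absurd h (lt_irrefl 1)
  | cons a m ih =>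
    by_cases ha : a < 1
    · exact ⟨a, Multiset.mem_cons_self a m, ha⟩
    · have ha1 : a = 1 := le_antisymm (h1 a (Multiset.mem_cons_self a m)) (not_lt.mp ha)
      rw [Multiset.prod_cons, ha1, one_mul] at h
      obtain ⟨x, hx, hx1⟩ := ih (fun x hx => h1 x (Multiset.mem_cons_of_mem hx)) h
      exact ⟨x, Multiset.mem_cons_of_mem hx, hx1⟩

lemma hensel_exists [IsAlgClosed Ω] (w : Valuation Ω Γ) {f : Polynomial Ω} (hmon : f.Monic)
    (hcoeff : ∀ i, w (f.coeff i) ≤ 1) {a₀ : Ω} (ha₀ : w a₀ ≤ 1)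
    (hev : w (f.eval a₀) < 1) :
    ∃ a, w a ≤ 1 ∧ f.eval a = 0 ∧ w (a - a₀) < 1 := by
  let R := w.integer
  let ψ : R →+* Ω := R.subtype
  have hinj : Function.Injective ψ := Subtype.val_injective
  obtain ⟨p, hp⟩ := exists_poly_map_eq ψ f (fun i => ⟨⟨f.coeff i, hcoeff i⟩, rfl⟩)
  have hroots_int : ∀ r ∈ f.roots, w r ≤ 1 := by
    intro r hr
    have halg : algebraMap ↥R Ω = ψ := rfl
    have hint : IsIntegral R r := by
      refine ⟨p, Polynomial.monic_of_injective hinj (by rwa [hp]), ?_⟩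
      rw [Polynomial.eval₂_eq_eval_map, halg, hp]
      exact Polynomial.isRoot_of_mem_roots hr
    exact (Valuation.integer.integers w).mem_of_integral hint
  have hprod : f = (f.roots.map fun r => Polynomial.X - Polynomial.C r).prod :=
    Polynomial.Splits.eq_prod_roots_of_monic (IsAlgClosed.splits f) hmon
  have heval : w (f.eval a₀) = (f.roots.map fun r => w (a₀ - r)).prod := by
    conv_lhs => rw [hprod]
    rw [Polynomial.eval_multiset_prod, Multiset.map_map, map_multiset_prod, Multiset.map_map]
    congr 1
    apply Multiset.map_congr rfl
    intro r _
    simp only [Function.comp_apply, Polynomial.eval_sub, Polynomial.eval_X, Polynomial.eval_C]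
  have h1 : ∀ x ∈ f.roots.map fun r => w (a₀ - r), x ≤ 1 := by
    intro x hx
    obtain ⟨r, hr, rfl⟩ := Multiset.mem_map.mp hx
    exact Valuation.map_sub_le w ha₀ (hroots_int r hr)
  obtain ⟨x, hx, hxlt⟩ := exists_lt_one_of_prod_lt_one h1 (heval ▸ hev)
  obtain ⟨r, hr, rfl⟩ := Multiset.mem_map.mp hx
  refine ⟨r, hroots_int r hr, Polynomial.isRoot_of_mem_roots hr, ?_⟩
  rw [w.map_sub_swap]
  exact hxlt

/-! ### Basic properties of the henselization -/

lemma le_henselization (w : Valuation Ω Γ) (N : Subfield Ω) : N ≤ henselization w N :=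
  le_sInf fun _ hM => hM.1

lemma henselization_mono (w : Valuation Ω Γ) {N N' : Subfield Ω} (h : N ≤ N') :
    henselization w N ≤ henselization w N' :=
  sInf_le_sInf fun M hM => ⟨le_trans h hM.1, hM.2⟩

lemma isHenselian_henselization [IsAlgClosed Ω] (w : Valuation Ω Γ) (N : Subfield Ω) :
    Subfield.IsHenselian w (henselization w N) := by
  rw [isHenselian_iff]
  intro f hmon hcM hcw a₀ haM haw hev hder
  obtain ⟨a, haw', hfa, hlt⟩ := hensel_exists w hmon hcw haw hev
  refine ⟨a, ?_, haw', hfa, hlt⟩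
  rw [henselization, Subfield.mem_sInf]
  intro M hM
  have hle : henselization w N ≤ M := sInf_le hM
  obtain ⟨a', ha'M, ha'w, hfa', hlt'⟩ := (isHenselian_iff w M).mp hM.2 f hmon
    (fun i => hle (hcM i)) hcw a₀ (hle haM) haw hev hder
  have heq : a' = a := hensel_unique w hmon hcw haw hder hfa' hfa hlt' hlt
  rwa [← heq]

/-! ### Directed suprema of henselian subfields -/

lemma exists_index_of_list {ι : Type*} [Nonempty ι] {S : ι → Subfield Ω}
    (hdir : Directed (· ≤ ·) S) (l : List Ω) (h : ∀ x ∈ l, x ∈ ⨆ i, S i) :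
    ∃ i, ∀ x ∈ l, x ∈ S i := by
  induction l with
  | nil => exact ⟨Classical.arbitrary ι, fun x hx => absurd hx List.not_mem_nil⟩
  | cons y l ih =>
    obtain ⟨i₁, hi₁⟩ := ih (fun x hx => h x (List.mem_cons_of_mem y hx))
    have hy : y ∈ ⨆ i, S i := h y List.mem_cons_self
    obtain ⟨i₂, hi₂⟩ := (Subfield.mem_iSup_of_directed hdir).mp hy
    obtain ⟨i, h₁, h₂⟩ := hdir i₁ i₂
    refine ⟨i, fun x hx => ?_⟩
    rcases List.mem_cons.mp hx with rfl | hx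
    · exact h₂ hi₂
    · exact h₁ (hi₁ x hx)

lemma isHenselian_iSup {ι : Type*} [Nonempty ι] (w : Valuation Ω Γ) {S : ι → Subfield Ω}
    (hdir : Directed (· ≤ ·) S) (hh : ∀ i, Subfield.IsHenselian w (S i)) :
    Subfield.IsHenselian w (⨆ i, S i) := by
  rw [isHenselian_iff]
  intro f hmon hcM hcw a₀ haM haw hev hder
  obtain ⟨i, hi⟩ := exists_index_of_list hdir (a₀ :: (List.range (f.natDegree + 1)).map f.coeff)
    (by
      intro x hx
      rcases List.mem_cons.mp hx with rfl | hx
      · exact haM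
      · obtain ⟨j, _, rfl⟩ := List.mem_map.mp hx
        exact hcM j)
  have hcM' : ∀ j, f.coeff j ∈ S i := by
    intro j
    by_cases hj : j ≤ f.natDegree
    · exact hi _ (List.mem_cons_of_mem _
        (List.mem_map_of_mem (f := f.coeff) (List.mem_range.mpr (Nat.lt_succ_of_le hj))))
    · rw [Polynomial.coeff_eq_zero_of_natDegree_lt (not_le.mp hj)]
      exact zero_mem _
  obtain ⟨a, haM', haw', hfa, hlt⟩ := (isHenselian_iff w (S i)).mp (hh i) f hmon hcM' hcw a₀
    (hi a₀ List.mem_cons_self) haw hev hder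
  exact ⟨a, (SetLike.le_def.mp (le_iSup S i)) haM', haw', hfa, hlt⟩

/-! ### Finite extensions -/

set_option synthInstance.maxHeartbeats 1000000 in
lemma finiteExt_closure (K : Subfield Ω) (t : Finset Ω) (halg : ∀ x ∈ t, AlgOver K x) :
    Subfield.FiniteExt K (Subfield.closure ((K : Set Ω) ∪ ↑t)) := by
  classical
  have halgmap : algebraMap ↥K Ω = K.subtype := RingHom.algebraMap_toAlgebra _
  have hint : ∀ x ∈ (↑t : Set Ω), IsIntegral ↥K x := by
    intro x hx
    obtain ⟨f, hf0, hfc, hfe⟩ := halg x hx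
    obtain ⟨p, hp⟩ := exists_poly_map_eq (K.subtype) f (fun i => ⟨⟨f.coeff i, hfc i⟩, rfl⟩)
    have hp0 : p ≠ 0 := by
      rintro rfl
      rw [Polynomial.map_zero] at hp
      exact hf0 hp.symm
    have halgx : IsAlgebraic ↥K x :=
      ⟨p, hp0, by rw [Polynomial.aeval_def, Polynomial.eval₂_eq_eval_map, halgmap, hp, hfe]⟩
    exact halgx.isIntegral
  set E := IntermediateField.adjoin ↥K (↑t : Set Ω) with hE
  have hfin : Finite (↑t : Set Ω) := t.finite_toSet
  have hfd : FiniteDimensional ↥K E := IntermediateField.finiteDimensional_adjoin hint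
  set L := Subfield.closure ((K : Set Ω) ∪ ↑t) with hL
  have hKL : K ≤ L := fun x hx => Subfield.subset_closure (Or.inl hx)
  have heq : L = E.toSubfield := by
    apply le_antisymm
    · apply Subfield.closure_le.mpr
      rintro x (hx | hx)
      · have := E.algebraMap_mem ⟨x, hx⟩
        rwa [halgmap] at this
      · exact IntermediateField.subset_adjoin ↥K _ hx
    · have hC : ∀ k : ↥K, algebraMap ↥K Ω k ∈ L := by
        intro k
        rw [halgmap]
        exact Subfield.subset_closure (Or.inl k.2)
      let E' : IntermediateField ↥K Ω := { L with algebraMap_mem' := hC }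
      have hEE' : E ≤ E' :=
        IntermediateField.adjoin_le_iff.mpr (fun x hx => Subfield.subset_closure (Or.inr hx))
      exact fun x hx => hEE' hx
  refine ⟨hKL, ?_⟩
  letI : Algebra ↥K ↥L := (Subfield.inclusion hKL).toAlgebra
  have hamap : algebraMap ↥K ↥L = Subfield.inclusion hKL := RingHom.algebraMap_toAlgebra _
  show Module.Finite ↥K ↥L
  let φ : ↥E →ₗ[↥K] ↥L :=
    { toFun := fun x => ⟨(x : Ω), by rw [heq]; exact x.2⟩
      map_add' := fun x y => Subtype.ext rfl
      map_smul' := fun k x => by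
        apply Subtype.ext
        show ((k • x : ↥E) : Ω) = ((k • (⟨(x : Ω), _⟩ : ↥L) : ↥L) : Ω)
        rw [IntermediateField.coe_smul]
        rw [Algebra.smul_def, Algebra.smul_def, hamap, halgmap]
        rfl }
  have hsurj : Function.Surjective φ := by
    rintro ⟨y, hy⟩
    rw [heq] at hy
    exact ⟨⟨y, hy⟩, rfl⟩
  exact Module.Finite.of_surjective φ hsurj

end Stmt19Aux

/-- Let (F|K,v) be a valued function field (inside a fixed valued
algebraic closure Ω of F) and K'|K an algebraic extension such that (F.K'|K',v) is
henselian rational.  Then there exists a finite subextension L|K of K'|K such that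
(F.L|L,v) is henselian rational. -/
theorem stmt19 {Ω Γ : Type*} [Field Ω] [IsAlgClosed Ω] [LinearOrderedCommGroupWithZero Γ]
    (w : Valuation Ω Γ) (K F K' : Subfield Ω) (hKF : K ≤ F)
    (hfg : ∃ s : Finset Ω, F = Subfield.closure ((K : Set Ω) ∪ ↑s))
    (hKK' : K ≤ K') (halg : ∀ x ∈ K', AlgOver K x)
    (hhr : HenselianRational w K' (F ⊔ K')) :
    ∃ L : Subfield Ω, K ≤ L ∧ L ≤ K' ∧ Subfield.FiniteExt K L ∧
      HenselianRational w L (F ⊔ L) := by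
  classical
  open Stmt19Aux in
  obtain ⟨T, hT, hTi, hTle⟩ := hhr
  obtain ⟨s, hs⟩ := hfg
  haveI : Nonempty (Finset ↥K') := ⟨∅⟩
  set Lf : Finset ↥K' → Subfield Ω :=
    fun t => Subfield.closure ((K : Set Ω) ∪ (Subtype.val '' (↑t : Set ↥K'))) with hLf
  have hLmono : ∀ {t₁ t₂ : Finset ↥K'}, t₁ ≤ t₂ → Lf t₁ ≤ Lf t₂ := by
    intro t₁ t₂ h
    exact Subfield.closure_mono
      (Set.union_subset_union_right _ (Set.image_mono (Finset.coe_subset.mpr h)))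
  have hKL : ∀ t, K ≤ Lf t := fun t x hx => Subfield.subset_closure (Or.inl hx)
  have hLK' : ∀ t, Lf t ≤ K' := by
    intro t
    apply Subfield.closure_le.mpr
    rintro x (hx | ⟨y, _, rfl⟩)
    · exact hKK' hx
    · exact y.2
  set N : Finset ↥K' → Subfield Ω :=
    fun t => Subfield.closure ((Lf t : Set Ω) ∪ (T ∩ ↑(F ⊔ Lf t))) with hN
  set H : Finset ↥K' → Subfield Ω := fun t => henselization w (N t) with hH
  have hNmono : ∀ {t₁ t₂ : Finset ↥K'}, t₁ ≤ t₂ → N t₁ ≤ N t₂ := by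
    intro t₁ t₂ h
    apply Subfield.closure_mono
    apply Set.union_subset_union
    · exact SetLike.coe_subset_coe.mpr (hLmono h)
    · exact Set.inter_subset_inter subset_rfl
        (SetLike.coe_subset_coe.mpr (sup_le_sup_left (hLmono h) F))
  have hHmono : ∀ {t₁ t₂ : Finset ↥K'}, t₁ ≤ t₂ → H t₁ ≤ H t₂ :=
    fun h => henselization_mono w (hNmono h)
  have hdir : Directed (· ≤ ·) H :=
    fun t₁ t₂ => ⟨t₁ ⊔ t₂, hHmono le_sup_left, hHmono le_sup_right⟩
  have hLN : ∀ t, Lf t ≤ N t := fun t x hx => Subfield.subset_closure (Or.inl hx)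
  have hNH : ∀ t, N t ≤ H t := fun t => le_henselization w (N t)
  have hdirFL : Directed (· ≤ ·) (fun t => F ⊔ Lf t) :=
    fun t₁ t₂ => ⟨t₁ ⊔ t₂, sup_le_sup_left (hLmono le_sup_left) F,
      sup_le_sup_left (hLmono le_sup_right) F⟩
  have hFK'le : F ⊔ K' ≤ ⨆ t, (F ⊔ Lf t) := by
    apply sup_le
    · exact le_trans le_sup_left (le_iSup (fun t => F ⊔ Lf t) (∅ : Finset ↥K'))
    · intro x hx
      have hmem : x ∈ F ⊔ Lf {⟨x, hx⟩} := by
        apply SetLike.le_def.mp le_sup_right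
        exact Subfield.subset_closure (Or.inr ⟨⟨x, hx⟩, Finset.mem_coe.mpr (Finset.mem_singleton_self _), rfl⟩)
      exact SetLike.le_def.mp (le_iSup (fun t => F ⊔ Lf t) _) hmem
  have hU : Subfield.IsHenselian w (⨆ t, H t) :=
    isHenselian_iSup w hdir (fun t => isHenselian_henselization w (N t))
  have hclU : Subfield.closure ((K' : Set Ω) ∪ T) ≤ ⨆ t, H t := by
    apply Subfield.closure_le.mpr
    rintro x (hx | hx)
    · have hmem : x ∈ H {⟨x, hx⟩} :=
        hNH _ (hLN _ (Subfield.subset_closure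
          (Or.inr ⟨⟨x, hx⟩, Finset.mem_coe.mpr (Finset.mem_singleton_self _), rfl⟩)))
      exact SetLike.le_def.mp (le_iSup H _) hmem
    · have hxF : x ∈ F ⊔ K' := hT hx
      obtain ⟨t, ht⟩ := (Subfield.mem_iSup_of_directed hdirFL).mp
        (SetLike.le_def.mp hFK'le hxF)
      have hmem : x ∈ N t := Subfield.subset_closure (Or.inr ⟨hx, ht⟩)
      exact SetLike.le_def.mp (le_iSup H t) (hNH t hmem)
  have hHen : henselization w (Subfield.closure ((K' : Set Ω) ∪ T)) ≤ ⨆ t, H t :=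
    sInf_le ⟨hclU, hU⟩
  have hsU : ∀ x ∈ s.toList, x ∈ ⨆ t, H t := by
    intro x hxl
    have hxF : x ∈ F := by
      rw [hs]
      exact Subfield.subset_closure (Or.inr (Finset.mem_coe.mpr (Finset.mem_toList.mp hxl)))
    exact hHen (hTle (SetLike.le_def.mp le_sup_left hxF))
  obtain ⟨tstar, htstar⟩ := exists_index_of_list hdir s.toList hsU
  refine ⟨Lf tstar, hKL tstar, hLK' tstar, ?_, ?_⟩
  · have himg : (Subtype.val '' (↑tstar : Set ↥K')) = ↑(tstar.image Subtype.val) :=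
      (Finset.coe_image).symm
    rw [hLf]
    simp only []
    rw [himg]
    apply finiteExt_closure
    intro x hx
    obtain ⟨y, _, rfl⟩ := Finset.mem_image.mp hx
    exact halg y.1 y.2
  · refine ⟨T ∩ ↑(F ⊔ Lf tstar), Set.inter_subset_right, ?_, ?_⟩
    · intro n tt f htt hinj hcoef hev
      exact hTi n tt f (fun i => (htt i).1) hinj (fun m => hLK' tstar (hcoef m)) hev
    · have hFH : F ≤ H tstar := by
        rw [hs]
        apply Subfield.closure_le.mpr
        rintro x (hx | hx)
        · exact (hNH tstar) ((hLN tstar) (hKL tstar hx))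
        · exact htstar x (Finset.mem_toList.mpr hx)
      exact sup_le hFH (le_trans (hLN tstar) (hNH tstar))
end
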